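/- arXiv:2105.01310 — 5 statements merged into one kernel-verified Lean document; each statement's English description precedes it below -/
import Mathlib

section
/- E[T] = 3ab. -/
open MeasureTheory ProbabilityTheory
open scoped ENNReal

open Set
open scoped Classical

namespace Stmt0Aux

def inV (w : ℤ × ℤ) : Prop := w = (-1, 0) ∨ w = (1, -1) ∨ w = (0, 1)

def Aseq (a : ℕ) (η : ℕ → ℤ × ℤ) (m : ℕ) : ℤ := (a : ℤ) + ∑ k ∈ Finset.range m, (η k).1
def Bseq (b : ℕ) (η : ℕ → ℤ × ℤ) (m : ℕ) : ℤ := (b : ℤ) + ∑ k ∈ Finset.range m, (η k).2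

def aliveP (a b n : ℕ) (η : ℕ → ℤ × ℤ) : Prop :=
  (∀ k ≤ n, Aseq a η k * Bseq b η k ≠ 0) ∧ ∀ k < n, inV (η k)

noncomputable def χseq (a b n : ℕ) (η : ℕ → ℤ × ℤ) : ℝ≥0∞ := if aliveP a b n η then 1 else 0

noncomputable def g2 (x y : ℤ) : ℝ≥0∞ := ((x.toNat * y.toNat : ℕ) : ℝ≥0∞)
noncomputable def g3 (x y : ℤ) : ℝ≥0∞ :=
  ((x.toNat * y.toNat * (x.toNat + y.toNat) : ℕ) : ℝ≥0∞)

lemma Aseq_succ (a : ℕ) (η : ℕ → ℤ × ℤ) (m : ℕ) :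
    Aseq a η (m + 1) = Aseq a η m + (η m).1 := by
  simp [Aseq, Finset.sum_range_succ, add_assoc]

lemma Bseq_succ (b : ℕ) (η : ℕ → ℤ × ℤ) (m : ℕ) :
    Bseq b η (m + 1) = Bseq b η m + (η m).2 := by
  simp [Bseq, Finset.sum_range_succ, add_assoc]

lemma Aseq_congr {a m} {η η' : ℕ → ℤ × ℤ} (h : ∀ k < m, η k = η' k) :
    Aseq a η m = Aseq a η' m := by
  unfold Aseq
  congr 1
  exact Finset.sum_congr rfl fun k hk => by rw [h k (Finset.mem_range.mp hk)]

lemma Bseq_congr {b m} {η η' : ℕ → ℤ × ℤ} (h : ∀ k < m, η k = η' k) :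
    Bseq b η m = Bseq b η' m := by
  unfold Bseq
  congr 1
  exact Finset.sum_congr rfl fun k hk => by rw [h k (Finset.mem_range.mp hk)]

lemma alive_congr {a b n} {η η' : ℕ → ℤ × ℤ} (h : ∀ k < n, η k = η' k) :
    aliveP a b n η ↔ aliveP a b n η' := by
  unfold aliveP
  constructor <;> rintro ⟨h1, h2⟩ <;> refine ⟨fun k hk => ?_, fun k hk => ?_⟩
  · rw [← Aseq_congr (fun j hj => h j (lt_of_lt_of_le hj hk)),
        ← Bseq_congr (fun j hj => h j (lt_of_lt_of_le hj hk))]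
    exact h1 k hk
  · rw [← h k hk]; exact h2 k hk
  · rw [Aseq_congr (fun j hj => h j (lt_of_lt_of_le hj hk)),
        Bseq_congr (fun j hj => h j (lt_of_lt_of_le hj hk))]
    exact h1 k hk
  · rw [h k hk]; exact h2 k hk

lemma alive_succ {a b n} {η : ℕ → ℤ × ℤ} :
    aliveP a b (n + 1) η ↔
      aliveP a b n η ∧ inV (η n) ∧ Aseq a η (n + 1) * Bseq b η (n + 1) ≠ 0 := by
  unfold aliveP
  constructor
  · rintro ⟨h1, h2⟩
    exact ⟨⟨fun k hk => h1 k (by omega), fun k hk => h2 k (by omega)⟩,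
      h2 n (by omega), h1 (n + 1) le_rfl⟩
  · rintro ⟨⟨h1, h2⟩, h3, h4⟩
    refine ⟨fun k hk => ?_, fun k hk => ?_⟩
    · rcases Nat.lt_or_ge k (n + 1) with hk' | hk'
      · exact h1 k (by omega)
      · have : k = n + 1 := by omega
        subst this; exact h4
    · rcases Nat.lt_or_ge k n with hk' | hk'
      · exact h2 k hk'
      · have : k = n := by omega
        subst this; exact h3

lemma inV_fst_ge {w : ℤ × ℤ} (h : inV w) : -1 ≤ w.1 := by
  rcases h with h | h | h <;> subst h <;> norm_num

lemma inV_snd_ge {w : ℤ × ℤ} (h : inV w) : -1 ≤ w.2 := by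
  rcases h with h | h | h <;> subst h <;> norm_num

lemma alive_pos {a b n} {η : ℕ → ℤ × ℤ} (ha : 0 < a) (hb : 0 < b)
    (h : aliveP a b n η) : ∀ k ≤ n, 1 ≤ Aseq a η k ∧ 1 ≤ Bseq b η k := by
  intro k hk
  induction k with
  | zero =>
    constructor <;> simp [Aseq, Bseq] <;> [exact_mod_cast ha; exact_mod_cast hb]
  | succ m ih =>
    have hm := ih (by omega)
    have hV := h.2 m (by omega)
    have h1 := inV_fst_ge hV
    have h2 := inV_snd_ge hV
    have hA : 0 ≤ Aseq a η (m + 1) := by rw [Aseq_succ]; omega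
    have hB : 0 ≤ Bseq b η (m + 1) := by rw [Bseq_succ]; omega
    have hne := h.1 (m + 1) hk
    constructor <;> by_contra hc <;> push_neg at hc
    · have : Aseq a η (m + 1) = 0 := by omega
      exact hne (by rw [this, zero_mul])
    · have : Bseq b η (m + 1) = 0 := by omega
      exact hne (by rw [this, mul_zero])

lemma g2_zero {x y : ℤ} (hx : 0 ≤ x) (hy : 0 ≤ y) (h : x * y = 0) : g2 x y = 0 := by
  unfold g2
  rcases mul_eq_zero.mp h with h | h <;> subst h <;> simp

lemma g3_zero {x y : ℤ} (hx : 0 ≤ x) (hy : 0 ≤ y) (h : x * y = 0) : g3 x y = 0 := by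
  unfold g3
  rcases mul_eq_zero.mp h with h | h <;> subst h <;> simp

lemma nat_id2 (m k : ℕ) (hm1 : 1 ≤ m) (hk1 : 1 ≤ k) :
    (m - 1) * k + ((m + 1) * (k - 1) + m * (k + 1)) + 1 = 3 * (m * k) := by
  obtain ⟨m', rfl⟩ := Nat.exists_eq_add_of_le hm1
  obtain ⟨k', rfl⟩ := Nat.exists_eq_add_of_le hk1
  simp [Nat.add_sub_cancel_left]
  ring

lemma nat_id3 (m k : ℕ) (hm1 : 1 ≤ m) (hk1 : 1 ≤ k) :
    (m - 1) * k * (m - 1 + k) + ((m + 1) * (k - 1) * (m + 1 + (k - 1)) +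
      m * (k + 1) * (m + (k + 1))) = 3 * (m * k * (m + k)) := by
  obtain ⟨m', rfl⟩ := Nat.exists_eq_add_of_le hm1
  obtain ⟨k', rfl⟩ := Nat.exists_eq_add_of_le hk1
  simp [Nat.add_sub_cancel_left]
  ring

lemma id2 {x y : ℤ} (hx : 1 ≤ x) (hy : 1 ≤ y) :
    g2 (x + -1) (y + 0) + (g2 (x + 1) (y + -1) + g2 (x + 0) (y + 1)) + 1 = 3 * g2 x y := by
  set m := x.toNat with hm
  set k := y.toNat with hk
  have e1 : (x + -1).toNat = m - 1 := by omega
  have e2 : (y + 0).toNat = k := by omega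
  have e3 : (x + 1).toNat = m + 1 := by omega
  have e4 : (y + -1).toNat = k - 1 := by omega
  have e5 : (x + 0).toNat = m := by omega
  have e6 : (y + 1).toNat = k + 1 := by omega
  have hm1 : 1 ≤ m := by omega
  have hk1 : 1 ≤ k := by omega
  unfold g2
  rw [e1, e2, e3, e4, e5, e6]
  have : (m - 1) * k + ((m + 1) * (k - 1) + m * (k + 1)) + 1 = 3 * (m * k) :=
    nat_id2 m k hm1 hk1
  calc ((m - 1) * k : ℕ) + (((m + 1) * (k - 1) : ℕ) + (m * (k + 1) : ℕ)) + 1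
      = (((m - 1) * k + ((m + 1) * (k - 1) + m * (k + 1)) + 1 : ℕ) : ℝ≥0∞) := by push_cast; ring
    _ = ((3 * (m * k) : ℕ) : ℝ≥0∞) := by rw [this]
    _ = 3 * ((m * k : ℕ) : ℝ≥0∞) := by push_cast; ring

lemma id3 {x y : ℤ} (hx : 1 ≤ x) (hy : 1 ≤ y) :
    g3 (x + -1) (y + 0) + (g3 (x + 1) (y + -1) + g3 (x + 0) (y + 1)) = 3 * g3 x y := by
  set m := x.toNat with hm
  set k := y.toNat with hk
  have e1 : (x + -1).toNat = m - 1 := by omega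
  have e2 : (y + 0).toNat = k := by omega
  have e3 : (x + 1).toNat = m + 1 := by omega
  have e4 : (y + -1).toNat = k - 1 := by omega
  have e5 : (x + 0).toNat = m := by omega
  have e6 : (y + 1).toNat = k + 1 := by omega
  have hm1 : 1 ≤ m := by omega
  have hk1 : 1 ≤ k := by omega
  unfold g3
  rw [e1, e2, e3, e4, e5, e6]
  have : (m - 1) * k * (m - 1 + k) + ((m + 1) * (k - 1) * (m + 1 + (k - 1)) +
      m * (k + 1) * (m + (k + 1))) = 3 * (m * k * (m + k)) :=
    nat_id3 m k hm1 hk1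
  calc ((m - 1) * k * (m - 1 + k) : ℕ) + (((m + 1) * (k - 1) * (m + 1 + (k - 1)) : ℕ)
        + ((m * (k + 1) * (m + (k + 1))) : ℕ))
      = (((m - 1) * k * (m - 1 + k) + ((m + 1) * (k - 1) * (m + 1 + (k - 1)) +
          m * (k + 1) * (m + (k + 1))) : ℕ) : ℝ≥0∞) := by push_cast; ring
    _ = ((3 * (m * k * (m + k)) : ℕ) : ℝ≥0∞) := by rw [this]
    _ = 3 * ((m * k * (m + k) : ℕ) : ℝ≥0∞) := by push_cast; ring

lemma nat_ui (K m k : ℕ) : K * (m * k) ≤ K ^ 3 + m * k * (m + k) := by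
  rcases le_or_gt (m + k) K with h | h
  · have h1 : m * k ≤ (m + k) * (m + k) :=
      Nat.mul_le_mul (Nat.le_add_right m k) (Nat.le_add_left k m)
    have h2 : K * (m * k) ≤ K * ((m + k) * (m + k)) := Nat.mul_le_mul_left _ h1
    have h3 : K * ((m + k) * (m + k)) ≤ K * (K * K) :=
      Nat.mul_le_mul_left _ (Nat.mul_le_mul h h)
    calc K * (m * k) ≤ K * (K * K) := le_trans h2 h3
      _ = K ^ 3 := by ring
      _ ≤ K ^ 3 + m * k * (m + k) := Nat.le_add_right _ _
  · calc K * (m * k) = m * k * K := by ring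
      _ ≤ m * k * (m + k) := Nat.mul_le_mul_left _ (le_of_lt h)
      _ ≤ K ^ 3 + m * k * (m + k) := Nat.le_add_left _ _

lemma ui (K : ℕ) (x y : ℤ) : (K : ℝ≥0∞) * g2 x y ≤ (K : ℝ≥0∞) ^ 3 + g3 x y := by
  unfold g2 g3
  calc (K : ℝ≥0∞) * ((x.toNat * y.toNat : ℕ) : ℝ≥0∞)
      = ((K * (x.toNat * y.toNat) : ℕ) : ℝ≥0∞) := by push_cast; ring
    _ ≤ ((K ^ 3 + x.toNat * y.toNat * (x.toNat + y.toNat) : ℕ) : ℝ≥0∞) := by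
        exact_mod_cast nat_ui K x.toNat y.toNat
    _ = (K : ℝ≥0∞) ^ 3 + ((x.toNat * y.toNat * (x.toNat + y.toNat) : ℕ) : ℝ≥0∞) := by
        push_cast; ring


def ext (n : ℕ) (g : ↥(Finset.range n) → ℤ × ℤ) : ℕ → ℤ × ℤ :=
  fun k => if h : k ∈ Finset.range n then g ⟨k, h⟩ else 0

section Prob

variable {Ω : Type*} [MeasurableSpace Ω] (μ : Measure Ω)
variable (ξ : ℕ → Ω → ℤ × ℤ)

lemma measurable_traj (hmeas : ∀ n, Measurable (ξ n)) (n : ℕ) :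
    Measurable (fun ω (k : ↥(Finset.range n)) => ξ k ω) :=
  measurable_pi_lambda _ fun k => hmeas k

lemma ext_traj (n : ℕ) (ω : Ω) :
    ∀ k < n, ext n (fun j : ↥(Finset.range n) => ξ j ω) k = ξ k ω := by
  intro k hk
  simp [ext, Finset.mem_range.mpr hk]

lemma measurable_H (hmeas : ∀ n, Measurable (ξ n)) (n : ℕ)
    (H : (ℕ → ℤ × ℤ) → ℝ≥0∞)
    (hH : ∀ η η' : ℕ → ℤ × ℤ, (∀ k < n, η k = η' k) → H η = H η') :
    Measurable (fun ω => H (fun k => ξ k ω)) := by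
  have heq : (fun ω => H (fun k => ξ k ω)) =
      (fun g : ↥(Finset.range n) → ℤ × ℤ => H (ext n g)) ∘
        (fun ω (k : ↥(Finset.range n)) => ξ k ω) := by
    funext ω
    exact (hH _ _ fun k hk => (ext_traj ξ n ω k hk)).symm
  rw [heq]
  exact (measurable_of_countable _).comp (measurable_traj ξ hmeas n)

lemma indep_H (hmeas : ∀ n, Measurable (ξ n))
    (hindep : iIndepFun ξ μ) (n : ℕ)
    (H : (ℕ → ℤ × ℤ) → ℝ≥0∞)
    (hH : ∀ η η' : ℕ → ℤ × ℤ, (∀ k < n, η k = η' k) → H η = H η')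
    (ψ : ℤ × ℤ → ℝ≥0∞) :
    ∫⁻ ω, H (fun k => ξ k ω) * ψ (ξ n ω) ∂μ =
      (∫⁻ ω, H (fun k => ξ k ω) ∂μ) * ∫⁻ ω, ψ (ξ n ω) ∂μ := by
  have h1 : IndepFun (fun ω (k : ↥(Finset.range n)) => ξ k ω)
      (fun ω (k : ↥({n} : Finset ℕ)) => ξ k ω) μ :=
    hindep.indepFun_finset (Finset.range n) {n} (by simp) hmeas
  have h2 := h1.comp (φ := fun g : ↥(Finset.range n) → ℤ × ℤ => H (ext n g))
      (ψ := fun g : ↥({n} : Finset ℕ) → ℤ × ℤ => ψ (g ⟨n, Finset.mem_singleton_self n⟩))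
      (measurable_of_countable _) (measurable_of_countable _)
  have e1 : (fun ω => H (fun k => ξ k ω)) =
      (fun ω => H (ext n (fun j : ↥(Finset.range n) => ξ j ω))) := by
    funext ω
    exact (hH _ _ fun k hk => (ext_traj ξ n ω k hk)).symm
  have e2 : (fun ω => ψ (ξ n ω)) =
      ((fun g : ↥({n} : Finset ℕ) → ℤ × ℤ => ψ (g ⟨n, Finset.mem_singleton_self n⟩)) ∘
        (fun ω (k : ↥({n} : Finset ℕ)) => ξ k ω)) := rfl
  rw [show (fun ω => H (fun k => ξ k ω) * ψ (ξ n ω)) = fun ω =>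
      (((fun g : ↥(Finset.range n) → ℤ × ℤ => H (ext n g)) ∘
        (fun ω (k : ↥(Finset.range n)) => ξ k ω)) ω) *
      (((fun g : ↥({n} : Finset ℕ) → ℤ × ℤ => ψ (g ⟨n, Finset.mem_singleton_self n⟩)) ∘
        (fun ω (k : ↥({n} : Finset ℕ)) => ξ k ω)) ω) from funext fun ω => by
        simp only [Function.comp_apply]
        rw [hH _ _ fun k hk => (ext_traj ξ n ω k hk)], e1, e2]
  exact lintegral_mul_eq_lintegral_mul_lintegral_of_indepFun
    ((measurable_of_countable _).comp (measurable_traj ξ hmeas n))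
    ((measurable_of_countable _).comp (measurable_pi_lambda
      (fun ω (k : ↥({n} : Finset ℕ)) => ξ k ω) fun k => hmeas k))
    h2

end Prob
end Stmt0Aux

namespace Stmt0Aux

lemma alive_zero {a b : ℕ} (ha : 0 < a) (hb : 0 < b) (η : ℕ → ℤ × ℤ) :
    aliveP a b 0 η := by
  constructor
  · intro k hk
    have : k = 0 := Nat.le_zero.mp hk
    subst this
    simp only [Aseq, Bseq, Finset.range_zero, Finset.sum_empty, add_zero]
    have := mul_pos (Int.natCast_pos.mpr ha) (Int.natCast_pos.mpr hb)
    omega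
  · intro k hk; omega

lemma chi_zero {a b : ℕ} (ha : 0 < a) (hb : 0 < b) (η : ℕ → ℤ × ℤ) :
    χseq a b 0 η = 1 := if_pos (alive_zero ha hb η)

lemma step_pointwise {a b : ℕ} (ha : 0 < a) (hb : 0 < b) {G : ℤ → ℤ → ℝ≥0∞}
    (hG : ∀ x y : ℤ, 0 ≤ x → 0 ≤ y → x * y = 0 → G x y = 0) (n : ℕ) (η : ℕ → ℤ × ℤ) :
    χseq a b (n + 1) η * G (Aseq a η (n + 1)) (Bseq b η (n + 1)) =
      (χseq a b n η * G (Aseq a η n + -1) (Bseq b η n + 0)) *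
        (if η n = ((-1 : ℤ), (0 : ℤ)) then 1 else 0)
      + ((χseq a b n η * G (Aseq a η n + 1) (Bseq b η n + -1)) *
          (if η n = ((1 : ℤ), (-1 : ℤ)) then 1 else 0)
        + (χseq a b n η * G (Aseq a η n + 0) (Bseq b η n + 1)) *
            (if η n = ((0 : ℤ), (1 : ℤ)) then 1 else 0)) := by
  by_cases h : aliveP a b (n + 1) η
  · obtain ⟨h0, hV, hne⟩ := alive_succ.mp h
    have hχ1 : χseq a b (n + 1) η = 1 := if_pos h
    have hχ0 : χseq a b n η = 1 := if_pos h0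
    rw [hχ1, hχ0, Aseq_succ, Bseq_succ]
    rcases hV with hv | hv | hv <;> rw [hv] <;> simp
  · have hχ1 : χseq a b (n + 1) η = 0 := if_neg h
    rw [hχ1, zero_mul]
    by_cases h0 : aliveP a b n η
    · have hχ0 : χseq a b n η = 1 := if_pos h0
      by_cases hV : inV (η n)
      · have hprod : Aseq a η (n + 1) * Bseq b η (n + 1) = 0 := by
          by_contra hc; exact h (alive_succ.mpr ⟨h0, hV, hc⟩)
        have hpos := alive_pos ha hb h0 n le_rfl
        have hA1 : 1 ≤ Aseq a η n := hpos.1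
        have hB1 : 1 ≤ Bseq b η n := hpos.2
        rcases hV with hv | hv | hv
        · have eA : Aseq a η n + -1 = Aseq a η (n + 1) := by rw [Aseq_succ, hv]
          have eB : Bseq b η n + 0 = Bseq b η (n + 1) := by rw [Bseq_succ, hv]
          have hz : G (Aseq a η n + -1) (Bseq b η n + 0) = 0 := by
            rw [eA, eB]
            exact hG _ _ (by rw [← eA]; omega) (by rw [← eB]; omega) hprod
          rw [hv, hz]
          simp
        · have eA : Aseq a η n + 1 = Aseq a η (n + 1) := by rw [Aseq_succ, hv]
          have eB : Bseq b η n + -1 = Bseq b η (n + 1) := by rw [Bseq_succ, hv]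
          have hz : G (Aseq a η n + 1) (Bseq b η n + -1) = 0 := by
            rw [eA, eB]
            exact hG _ _ (by rw [← eA]; omega) (by rw [← eB]; omega) hprod
          rw [hv, hz]
          simp
        · have eA : Aseq a η n + 0 = Aseq a η (n + 1) := by rw [Aseq_succ, hv]
          have eB : Bseq b η n + 1 = Bseq b η (n + 1) := by rw [Bseq_succ, hv]
          have hz : G (Aseq a η n + 0) (Bseq b η n + 1) = 0 := by
            rw [eA, eB]
            exact hG _ _ (by rw [← eA]; omega) (by rw [← eB]; omega) hprod
          rw [hv, hz]
          simp
      · have h1 : η n ≠ ((-1 : ℤ), (0 : ℤ)) := fun hh => hV (Or.inl hh)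
        have h2 : η n ≠ ((1 : ℤ), (-1 : ℤ)) := fun hh => hV (Or.inr (Or.inl hh))
        have h3 : η n ≠ ((0 : ℤ), (1 : ℤ)) := fun hh => hV (Or.inr (Or.inr hh))
        simp [h1, h2, h3]
    · have hχ0 : χseq a b n η = 0 := if_neg h0
      simp [hχ0]

lemma sum_pointwise_g2 {a b : ℕ} (ha : 0 < a) (hb : 0 < b) (n : ℕ) (η : ℕ → ℤ × ℤ) :
    χseq a b n η * g2 (Aseq a η n + -1) (Bseq b η n + 0)
      + (χseq a b n η * g2 (Aseq a η n + 1) (Bseq b η n + -1)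
        + χseq a b n η * g2 (Aseq a η n + 0) (Bseq b η n + 1))
      + χseq a b n η
      = 3 * (χseq a b n η * g2 (Aseq a η n) (Bseq b η n)) := by
  by_cases h : aliveP a b n η
  · have hχ : χseq a b n η = 1 := if_pos h
    have hpos := alive_pos ha hb h n le_rfl
    rw [hχ]
    simpa using id2 hpos.1 hpos.2
  · have hχ : χseq a b n η = 0 := if_neg h
    simp [hχ]

lemma sum_pointwise_g3 {a b : ℕ} (ha : 0 < a) (hb : 0 < b) (n : ℕ) (η : ℕ → ℤ × ℤ) :
    χseq a b n η * g3 (Aseq a η n + -1) (Bseq b η n + 0)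
      + (χseq a b n η * g3 (Aseq a η n + 1) (Bseq b η n + -1)
        + χseq a b n η * g3 (Aseq a η n + 0) (Bseq b η n + 1))
      = 3 * (χseq a b n η * g3 (Aseq a η n) (Bseq b η n)) := by
  by_cases h : aliveP a b n η
  · have hχ : χseq a b n η = 1 := if_pos h
    have hpos := alive_pos ha hb h n le_rfl
    rw [hχ]
    simpa using id3 hpos.1 hpos.2
  · have hχ : χseq a b n η = 0 := if_neg h
    simp [hχ]

lemma ui_pointwise {a b : ℕ} (K n : ℕ) (η : ℕ → ℤ × ℤ) :
    (K : ℝ≥0∞) * (χseq a b n η * g2 (Aseq a η n) (Bseq b η n)) ≤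
      (K : ℝ≥0∞) ^ 3 * χseq a b n η + χseq a b n η * g3 (Aseq a η n) (Bseq b η n) := by
  by_cases h : aliveP a b n η
  · have hχ : χseq a b n η = 1 := if_pos h
    rw [hχ]
    simpa using ui K (Aseq a η n) (Bseq b η n)
  · have hχ : χseq a b n η = 0 := if_neg h
    simp [hχ]

lemma prefix_chiG {a b : ℕ} (n : ℕ) (G : ℤ → ℤ → ℝ≥0∞) (c : ℤ × ℤ) :
    ∀ η η' : ℕ → ℤ × ℤ, (∀ k < n, η k = η' k) →
      χseq a b n η * G (Aseq a η n + c.1) (Bseq b η n + c.2) =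
        χseq a b n η' * G (Aseq a η' n + c.1) (Bseq b η' n + c.2) := by
  intro η η' hp
  rw [Aseq_congr hp, Bseq_congr hp]
  unfold χseq
  rw [if_congr (alive_congr hp) rfl rfl]

lemma prefix_chi {a b : ℕ} (n : ℕ) :
    ∀ η η' : ℕ → ℤ × ℤ, (∀ k < n, η k = η' k) → χseq a b n η = χseq a b n η' := by
  intro η η' hp
  unfold χseq
  rw [if_congr (alive_congr hp) rfl rfl]

end Stmt0Aux

namespace Stmt0Aux

lemma prefix_chiG' {a b : ℕ} (n : ℕ) (G : ℤ → ℤ → ℝ≥0∞) (c1 c2 : ℤ) :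
    ∀ η η' : ℕ → ℤ × ℤ, (∀ k < n, η k = η' k) →
      χseq a b n η * G (Aseq a η n + c1) (Bseq b η n + c2) =
        χseq a b n η' * G (Aseq a η' n + c1) (Bseq b η' n + c2) := by
  intro η η' hp
  rw [Aseq_congr hp, Bseq_congr hp]
  unfold χseq
  rw [if_congr (alive_congr hp) rfl rfl]

section Prob2

variable {Ω : Type*} [MeasurableSpace Ω] (μ : Measure Ω) [IsProbabilityMeasure μ]
variable (ξ : ℕ → Ω → ℤ × ℤ) (a b : ℕ)

def trj (ω : Ω) : ℕ → ℤ × ℤ := fun k => ξ k ω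

noncomputable def eQ (n : ℕ) : ℝ≥0∞ :=
  ∫⁻ ω, χseq a b n (trj ξ ω) * g2 (Aseq a (trj ξ ω) n) (Bseq b (trj ξ ω) n) ∂μ

noncomputable def uQ (n : ℕ) : ℝ≥0∞ :=
  ∫⁻ ω, χseq a b n (trj ξ ω) * g3 (Aseq a (trj ξ ω) n) (Bseq b (trj ξ ω) n) ∂μ

noncomputable def pQ (n : ℕ) : ℝ≥0∞ := ∫⁻ ω, χseq a b n (trj ξ ω) ∂μ

variable {ξ}

lemma meas_chiG (hmeas : ∀ n, Measurable (ξ n)) (n : ℕ) (G : ℤ → ℤ → ℝ≥0∞) (c1 c2 : ℤ) :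
    Measurable (fun ω =>
      χseq a b n (trj ξ ω) * G (Aseq a (trj ξ ω) n + c1) (Bseq b (trj ξ ω) n + c2)) :=
  measurable_H ξ hmeas n _ (prefix_chiG' n G c1 c2)

lemma meas_chiG0 (hmeas : ∀ n, Measurable (ξ n)) (n : ℕ) (G : ℤ → ℤ → ℝ≥0∞) :
    Measurable (fun ω =>
      χseq a b n (trj ξ ω) * G (Aseq a (trj ξ ω) n) (Bseq b (trj ξ ω) n)) := by
  have := meas_chiG a b hmeas n G 0 0
  simpa using this

lemma meas_chi (hmeas : ∀ n, Measurable (ξ n)) (n : ℕ) :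
    Measurable (fun ω => χseq a b n (trj ξ ω)) :=
  measurable_H ξ hmeas n _ (prefix_chi n)

lemma lint_ind (hmeas : ∀ n, Measurable (ξ n)) (n : ℕ) (v : ℤ × ℤ) :
    ∫⁻ ω, (if ξ n ω = v then (1 : ℝ≥0∞) else 0) ∂μ = μ {ω | ξ n ω = v} := by
  have heq : (fun ω => if ξ n ω = v then (1 : ℝ≥0∞) else 0) =
      Set.indicator {ω | ξ n ω = v} 1 := by
    funext ω
    by_cases h : ξ n ω = v <;> simp [h, Set.indicator_apply]
  rw [heq]
  exact lintegral_indicator_one (show MeasurableSet {ω | ξ n ω = v} from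
    hmeas n (measurableSet_singleton v))

lemma term_eq (hmeas : ∀ n, Measurable (ξ n))
    (hindep : iIndepFun ξ μ)
    (hunif : ∀ n, ∀ v ∈ ({(-1, 0), (1, -1), (0, 1)} : Set (ℤ × ℤ)),
      μ {ω | ξ n ω = v} = 1 / 3)
    (n : ℕ) (G : ℤ → ℤ → ℝ≥0∞) (c1 c2 : ℤ) (v : ℤ × ℤ)
    (hv : v ∈ ({(-1, 0), (1, -1), (0, 1)} : Set (ℤ × ℤ))) :
    ∫⁻ ω, (χseq a b n (trj ξ ω) * G (Aseq a (trj ξ ω) n + c1) (Bseq b (trj ξ ω) n + c2)) *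
        (if ξ n ω = v then 1 else 0) ∂μ
      = (∫⁻ ω, χseq a b n (trj ξ ω) *
          G (Aseq a (trj ξ ω) n + c1) (Bseq b (trj ξ ω) n + c2) ∂μ) * (1 / 3) := by
  have h := indep_H μ ξ hmeas hindep n
    (fun η => χseq a b n η * G (Aseq a η n + c1) (Bseq b η n + c2))
    (prefix_chiG' n G c1 c2) (fun w => if w = v then 1 else 0)
  rw [show (1 / 3 : ℝ≥0∞) = μ {ω | ξ n ω = v} from (hunif n v hv).symm,
    ← lint_ind μ hmeas n v]
  exact h

lemma step (hmeas : ∀ n, Measurable (ξ n))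
    (hindep : iIndepFun ξ μ)
    (hunif : ∀ n, ∀ v ∈ ({(-1, 0), (1, -1), (0, 1)} : Set (ℤ × ℤ)),
      μ {ω | ξ n ω = v} = 1 / 3)
    (ha : 0 < a) (hb : 0 < b) {G : ℤ → ℤ → ℝ≥0∞}
    (hG : ∀ x y : ℤ, 0 ≤ x → 0 ≤ y → x * y = 0 → G x y = 0) (n : ℕ) :
    ∫⁻ ω, χseq a b (n + 1) (trj ξ ω) *
        G (Aseq a (trj ξ ω) (n + 1)) (Bseq b (trj ξ ω) (n + 1)) ∂μ
      = (∫⁻ ω, χseq a b n (trj ξ ω) *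
            G (Aseq a (trj ξ ω) n + -1) (Bseq b (trj ξ ω) n + 0) ∂μ) * (1 / 3)
        + ((∫⁻ ω, χseq a b n (trj ξ ω) *
              G (Aseq a (trj ξ ω) n + 1) (Bseq b (trj ξ ω) n + -1) ∂μ) * (1 / 3)
          + (∫⁻ ω, χseq a b n (trj ξ ω) *
              G (Aseq a (trj ξ ω) n + 0) (Bseq b (trj ξ ω) n + 1) ∂μ) * (1 / 3)) := by
  have hpt : (fun ω => χseq a b (n + 1) (trj ξ ω) *
      G (Aseq a (trj ξ ω) (n + 1)) (Bseq b (trj ξ ω) (n + 1))) = fun ω =>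
      (χseq a b n (trj ξ ω) * G (Aseq a (trj ξ ω) n + -1) (Bseq b (trj ξ ω) n + 0)) *
        (if ξ n ω = ((-1 : ℤ), (0 : ℤ)) then 1 else 0)
      + ((χseq a b n (trj ξ ω) * G (Aseq a (trj ξ ω) n + 1) (Bseq b (trj ξ ω) n + -1)) *
          (if ξ n ω = ((1 : ℤ), (-1 : ℤ)) then 1 else 0)
        + (χseq a b n (trj ξ ω) * G (Aseq a (trj ξ ω) n + 0) (Bseq b (trj ξ ω) n + 1)) *
            (if ξ n ω = ((0 : ℤ), (1 : ℤ)) then 1 else 0)) :=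
    funext fun ω => step_pointwise ha hb hG n (trj ξ ω)
  have mind : ∀ v : ℤ × ℤ, Measurable (fun ω => if ξ n ω = v then (1 : ℝ≥0∞) else 0) :=
    fun v => (measurable_of_countable (fun w : ℤ × ℤ => if w = v then (1 : ℝ≥0∞) else 0)).comp
      (hmeas n)
  have m1 : Measurable (fun ω =>
      (χseq a b n (trj ξ ω) * G (Aseq a (trj ξ ω) n + -1) (Bseq b (trj ξ ω) n + 0)) *
        (if ξ n ω = ((-1 : ℤ), (0 : ℤ)) then 1 else 0)) :=
    (meas_chiG a b hmeas n G (-1) 0).mul (mind _)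
  have m2 : Measurable (fun ω =>
      (χseq a b n (trj ξ ω) * G (Aseq a (trj ξ ω) n + 1) (Bseq b (trj ξ ω) n + -1)) *
        (if ξ n ω = ((1 : ℤ), (-1 : ℤ)) then 1 else 0)) :=
    (meas_chiG a b hmeas n G 1 (-1)).mul (mind _)
  rw [hpt, lintegral_add_left m1, lintegral_add_left m2,
    term_eq μ a b hmeas hindep hunif n G (-1) 0 _ (by left; rfl),
    term_eq μ a b hmeas hindep hunif n G 1 (-1) _ (by right; left; rfl),
    term_eq μ a b hmeas hindep hunif n G 0 1 _ (by right; right; rfl)]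

end Prob2
end Stmt0Aux

namespace Stmt0Aux
section Prob3

variable {Ω : Type*} [MeasurableSpace Ω] (μ : Measure Ω) [IsProbabilityMeasure μ]
variable {ξ : ℕ → Ω → ℤ × ℤ} (a b : ℕ)

lemma three_third : (3 : ℝ≥0∞) * (1 / 3) = 1 := by
  rw [one_div]
  exact ENNReal.mul_inv_cancel (by norm_num) (by norm_num)

lemma e_rec (hmeas : ∀ n, Measurable (ξ n))
    (hindep : iIndepFun ξ μ)
    (hunif : ∀ n, ∀ v ∈ ({(-1, 0), (1, -1), (0, 1)} : Set (ℤ × ℤ)),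
      μ {ω | ξ n ω = v} = 1 / 3)
    (ha : 0 < a) (hb : 0 < b) (n : ℕ) :
    3 * eQ μ ξ a b (n + 1) + pQ μ ξ a b n = 3 * eQ μ ξ a b n := by
  have hstep := step μ a b hmeas hindep hunif ha hb
    (fun x y hx hy h => g2_zero hx hy h) n
  set t1 := ∫⁻ ω, χseq a b n (trj ξ ω) *
    g2 (Aseq a (trj ξ ω) n + -1) (Bseq b (trj ξ ω) n + 0) ∂μ with ht1
  set t2 := ∫⁻ ω, χseq a b n (trj ξ ω) *
    g2 (Aseq a (trj ξ ω) n + 1) (Bseq b (trj ξ ω) n + -1) ∂μ with ht2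
  set t3 := ∫⁻ ω, χseq a b n (trj ξ ω) *
    g2 (Aseq a (trj ξ ω) n + 0) (Bseq b (trj ξ ω) n + 1) ∂μ with ht3
  have h1 : 3 * eQ μ ξ a b (n + 1) = t1 + (t2 + t3) := by
    have : eQ μ ξ a b (n + 1) = t1 * (1 / 3) + (t2 * (1 / 3) + t3 * (1 / 3)) := hstep
    calc 3 * eQ μ ξ a b (n + 1)
        = 3 * (1 / 3) * (t1 + (t2 + t3)) := by rw [this]; ring
      _ = t1 + (t2 + t3) := by rw [three_third, one_mul]
  have m1 := meas_chiG a b hmeas n g2 (-1) 0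
  have m2 := meas_chiG a b hmeas n g2 1 (-1)
  have m3 := meas_chiG a b hmeas n g2 0 1
  have h2 : t1 + (t2 + t3) + pQ μ ξ a b n = 3 * eQ μ ξ a b n := by
    have hpt : (fun ω => χseq a b n (trj ξ ω) *
        g2 (Aseq a (trj ξ ω) n + -1) (Bseq b (trj ξ ω) n + 0)
        + (χseq a b n (trj ξ ω) * g2 (Aseq a (trj ξ ω) n + 1) (Bseq b (trj ξ ω) n + -1)
          + χseq a b n (trj ξ ω) * g2 (Aseq a (trj ξ ω) n + 0) (Bseq b (trj ξ ω) n + 1))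
        + χseq a b n (trj ξ ω)) = fun ω =>
          3 * (χseq a b n (trj ξ ω) * g2 (Aseq a (trj ξ ω) n) (Bseq b (trj ξ ω) n)) :=
      funext fun ω => sum_pointwise_g2 ha hb n (trj ξ ω)
    have hL : ∫⁻ ω, (χseq a b n (trj ξ ω) *
        g2 (Aseq a (trj ξ ω) n + -1) (Bseq b (trj ξ ω) n + 0)
        + (χseq a b n (trj ξ ω) * g2 (Aseq a (trj ξ ω) n + 1) (Bseq b (trj ξ ω) n + -1)
          + χseq a b n (trj ξ ω) * g2 (Aseq a (trj ξ ω) n + 0) (Bseq b (trj ξ ω) n + 1))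
        + χseq a b n (trj ξ ω)) ∂μ = t1 + (t2 + t3) + pQ μ ξ a b n := by
      rw [lintegral_add_left (m1.fun_add (m2.fun_add m3)), lintegral_add_left m1,
        lintegral_add_left m2]
      rfl
    have hR : ∫⁻ ω, 3 * (χseq a b n (trj ξ ω) *
        g2 (Aseq a (trj ξ ω) n) (Bseq b (trj ξ ω) n)) ∂μ = 3 * eQ μ ξ a b n := by
      rw [lintegral_const_mul _ (meas_chiG0 a b hmeas n g2)]
      rfl
    rw [← hL, ← hR, hpt]
  rw [h1, h2]

lemma u_rec (hmeas : ∀ n, Measurable (ξ n))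
    (hindep : iIndepFun ξ μ)
    (hunif : ∀ n, ∀ v ∈ ({(-1, 0), (1, -1), (0, 1)} : Set (ℤ × ℤ)),
      μ {ω | ξ n ω = v} = 1 / 3)
    (ha : 0 < a) (hb : 0 < b) (n : ℕ) :
    uQ μ ξ a b (n + 1) = uQ μ ξ a b n := by
  have hstep := step μ a b hmeas hindep hunif ha hb
    (fun x y hx hy h => g3_zero hx hy h) n
  set t1 := ∫⁻ ω, χseq a b n (trj ξ ω) *
    g3 (Aseq a (trj ξ ω) n + -1) (Bseq b (trj ξ ω) n + 0) ∂μ with ht1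
  set t2 := ∫⁻ ω, χseq a b n (trj ξ ω) *
    g3 (Aseq a (trj ξ ω) n + 1) (Bseq b (trj ξ ω) n + -1) ∂μ with ht2
  set t3 := ∫⁻ ω, χseq a b n (trj ξ ω) *
    g3 (Aseq a (trj ξ ω) n + 0) (Bseq b (trj ξ ω) n + 1) ∂μ with ht3
  have h1 : 3 * uQ μ ξ a b (n + 1) = t1 + (t2 + t3) := by
    have : uQ μ ξ a b (n + 1) = t1 * (1 / 3) + (t2 * (1 / 3) + t3 * (1 / 3)) := hstep
    calc 3 * uQ μ ξ a b (n + 1)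
        = 3 * (1 / 3) * (t1 + (t2 + t3)) := by rw [this]; ring
      _ = t1 + (t2 + t3) := by rw [three_third, one_mul]
  have m1 := meas_chiG a b hmeas n g3 (-1) 0
  have m2 := meas_chiG a b hmeas n g3 1 (-1)
  have m3 := meas_chiG a b hmeas n g3 0 1
  have h2 : t1 + (t2 + t3) = 3 * uQ μ ξ a b n := by
    have hpt : (fun ω => χseq a b n (trj ξ ω) *
        g3 (Aseq a (trj ξ ω) n + -1) (Bseq b (trj ξ ω) n + 0)
        + (χseq a b n (trj ξ ω) * g3 (Aseq a (trj ξ ω) n + 1) (Bseq b (trj ξ ω) n + -1)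
          + χseq a b n (trj ξ ω) * g3 (Aseq a (trj ξ ω) n + 0) (Bseq b (trj ξ ω) n + 1)))
        = fun ω =>
          3 * (χseq a b n (trj ξ ω) * g3 (Aseq a (trj ξ ω) n) (Bseq b (trj ξ ω) n)) :=
      funext fun ω => sum_pointwise_g3 ha hb n (trj ξ ω)
    have hL : ∫⁻ ω, (χseq a b n (trj ξ ω) *
        g3 (Aseq a (trj ξ ω) n + -1) (Bseq b (trj ξ ω) n + 0)
        + (χseq a b n (trj ξ ω) * g3 (Aseq a (trj ξ ω) n + 1) (Bseq b (trj ξ ω) n + -1)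
          + χseq a b n (trj ξ ω) * g3 (Aseq a (trj ξ ω) n + 0) (Bseq b (trj ξ ω) n + 1))) ∂μ
        = t1 + (t2 + t3) := by
      rw [lintegral_add_left m1, lintegral_add_left m2]
    have hR : ∫⁻ ω, 3 * (χseq a b n (trj ξ ω) *
        g3 (Aseq a (trj ξ ω) n) (Bseq b (trj ξ ω) n)) ∂μ = 3 * uQ μ ξ a b n := by
      rw [lintegral_const_mul _ (meas_chiG0 a b hmeas n g3)]
      rfl
    rw [← hL, ← hR, hpt]
  have := h1.trans h2
  exact (ENNReal.mul_right_inj (by norm_num) (by norm_num)).mp this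

lemma eQ_zero (ha : 0 < a) (hb : 0 < b) : eQ μ ξ a b 0 = ((a * b : ℕ) : ℝ≥0∞) := by
  unfold eQ
  have hpt : (fun ω => χseq a b 0 (trj ξ ω) *
      g2 (Aseq a (trj ξ ω) 0) (Bseq b (trj ξ ω) 0)) =
      fun _ => ((a * b : ℕ) : ℝ≥0∞) := by
    funext ω
    rw [chi_zero ha hb, one_mul]
    simp [Aseq, Bseq, g2]
  rw [hpt, lintegral_const, measure_univ, mul_one]

lemma uQ_zero (ha : 0 < a) (hb : 0 < b) :
    uQ μ ξ a b 0 = ((a * b * (a + b) : ℕ) : ℝ≥0∞) := by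
  unfold uQ
  have hpt : (fun ω => χseq a b 0 (trj ξ ω) *
      g3 (Aseq a (trj ξ ω) 0) (Bseq b (trj ξ ω) 0)) =
      fun _ => ((a * b * (a + b) : ℕ) : ℝ≥0∞) := by
    funext ω
    rw [chi_zero ha hb, one_mul]
    simp [Aseq, Bseq, g3]
  rw [hpt, lintegral_const, measure_univ, mul_one]

lemma pQ_zero (ha : 0 < a) (hb : 0 < b) : pQ μ ξ a b 0 = 1 := by
  unfold pQ
  have hpt : (fun ω => χseq a b 0 (trj ξ ω)) = fun _ => (1 : ℝ≥0∞) :=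
    funext fun ω => chi_zero ha hb (trj ξ ω)
  rw [hpt, lintegral_const, measure_univ, mul_one]

lemma ui_int (hmeas : ∀ n, Measurable (ξ n)) (K n : ℕ) :
    (K : ℝ≥0∞) * eQ μ ξ a b n ≤ (K : ℝ≥0∞) ^ 3 * pQ μ ξ a b n + uQ μ ξ a b n := by
  have h1 : (K : ℝ≥0∞) * eQ μ ξ a b n = ∫⁻ ω, (K : ℝ≥0∞) *
      (χseq a b n (trj ξ ω) * g2 (Aseq a (trj ξ ω) n) (Bseq b (trj ξ ω) n)) ∂μ :=
    (lintegral_const_mul _ (meas_chiG0 a b hmeas n g2)).symm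
  rw [h1]
  refine le_trans (lintegral_mono fun ω => ui_pointwise K n (trj ξ ω)) ?_
  rw [lintegral_add_left (measurable_const.fun_mul (meas_chi a b hmeas n)),
    lintegral_const_mul _ (meas_chi a b hmeas n)]
  rfl

end Prob3
end Stmt0Aux

namespace Stmt0Aux
section Prob4

variable {Ω : Type*} [MeasurableSpace Ω] (μ : Measure Ω) [IsProbabilityMeasure μ]
variable {ξ : ℕ → Ω → ℤ × ℤ} (a b : ℕ)

variable (hmeas : ∀ n, Measurable (ξ n))
    (hindep : iIndepFun ξ μ)
    (hunif : ∀ n, ∀ v ∈ ({(-1, 0), (1, -1), (0, 1)} : Set (ℤ × ℤ)),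
      μ {ω | ξ n ω = v} = 1 / 3)
    (ha : 0 < a) (hb : 0 < b)

include hmeas hindep hunif ha hb

lemma partial_sum (n : ℕ) :
    ∑ k ∈ Finset.range n, pQ μ ξ a b k + 3 * eQ μ ξ a b n = 3 * eQ μ ξ a b 0 := by
  induction n with
  | zero => simp
  | succ m ih =>
    rw [Finset.sum_range_succ, add_assoc, add_comm (pQ μ ξ a b m),
      e_rec μ a b hmeas hindep hunif ha hb m, ih]

lemma eQ_le_zero (n : ℕ) : eQ μ ξ a b n ≤ eQ μ ξ a b 0 := by
  have h := partial_sum μ a b hmeas hindep hunif ha hb n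
  have h2 : 3 * eQ μ ξ a b n ≤ 3 * eQ μ ξ a b 0 := le_of_add_le_right h.le
  exact (ENNReal.mul_le_mul_iff_right (by norm_num) (by norm_num)).mp h2

lemma eQ_anti : Antitone (eQ μ ξ a b) := by
  refine antitone_nat_of_succ_le fun n => ?_
  have h := e_rec μ a b hmeas hindep hunif ha hb n
  have h2 : 3 * eQ μ ξ a b (n + 1) ≤ 3 * eQ μ ξ a b n := by
    rw [← h]; exact le_self_add
  exact (ENNReal.mul_le_mul_iff_right (by norm_num) (by norm_num)).mp h2

lemma uQ_const (n : ℕ) : uQ μ ξ a b n = ((a * b * (a + b) : ℕ) : ℝ≥0∞) := by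
  induction n with
  | zero => exact uQ_zero μ a b ha hb
  | succ m ih => rw [u_rec μ a b hmeas hindep hunif ha hb m, ih]

lemma tsum_pQ_ne_top : ∑' n, pQ μ ξ a b n ≠ ⊤ := by
  have hb' : ∀ n, ∑ k ∈ Finset.range n, pQ μ ξ a b k ≤ 3 * ((a * b : ℕ) : ℝ≥0∞) := by
    intro n
    have h := partial_sum μ a b hmeas hindep hunif ha hb n
    rw [eQ_zero μ a b ha hb] at h
    exact h ▸ le_self_add
  rw [ENNReal.tsum_eq_iSup_nat]
  refine ne_top_of_le_ne_top ?_ (iSup_le hb')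
  exact ENNReal.mul_ne_top (by norm_num) (ENNReal.natCast_ne_top _)

lemma pQ_tendsto : Filter.Tendsto (pQ μ ξ a b) Filter.atTop (nhds 0) :=
  ENNReal.tendsto_atTop_zero_of_tsum_ne_top
    (tsum_pQ_ne_top μ a b hmeas hindep hunif ha hb)

lemma eQ_tendsto : Filter.Tendsto (eQ μ ξ a b) Filter.atTop (nhds 0) := by
  set L := ⨅ n, eQ μ ξ a b n with hL
  have htend : Filter.Tendsto (eQ μ ξ a b) Filter.atTop (nhds L) :=
    tendsto_atTop_iInf (eQ_anti μ a b hmeas hindep hunif ha hb)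
  have hLfin : L ≠ ⊤ := by
    refine ne_top_of_le_ne_top ?_ (iInf_le _ 0)
    rw [eQ_zero μ a b ha hb]
    exact ENNReal.natCast_ne_top _
  set C := ((a * b * (a + b) : ℕ) : ℝ≥0∞) with hC
  have hCfin : C ≠ ⊤ := ENNReal.natCast_ne_top _
  have hKL : ∀ K : ℕ, (K : ℝ≥0∞) * L ≤ C := by
    intro K
    have t1 : Filter.Tendsto (fun n => (K : ℝ≥0∞) * eQ μ ξ a b n) Filter.atTop
        (nhds ((K : ℝ≥0∞) * L)) :=
      ENNReal.Tendsto.const_mul htend (Or.inr (ENNReal.natCast_ne_top K))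
    have t2 : Filter.Tendsto (fun n => (K : ℝ≥0∞) ^ 3 * pQ μ ξ a b n + C) Filter.atTop
        (nhds ((K : ℝ≥0∞) ^ 3 * 0 + C)) := by
      refine Filter.Tendsto.add ?_ tendsto_const_nhds
      exact ENNReal.Tendsto.const_mul (pQ_tendsto μ a b hmeas hindep hunif ha hb)
        (Or.inr (by simp [ENNReal.pow_ne_top (ENNReal.natCast_ne_top K)]))
    have t2' : Filter.Tendsto (fun n => (K : ℝ≥0∞) ^ 3 * pQ μ ξ a b n + C) Filter.atTop
        (nhds C) := by simpa using t2
    refine le_of_tendsto_of_tendsto' t1 t2' fun n => ?_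
    have := ui_int μ a b hmeas K n
    rwa [uQ_const μ a b hmeas hindep hunif ha hb n] at this
  have hL0 : L = 0 := by
    by_contra hc
    obtain ⟨K, hK⟩ := ENNReal.exists_nat_gt (ENNReal.div_lt_top hCfin hc).ne
    have : C < (K : ℝ≥0∞) * L :=
      (ENNReal.div_lt_iff (Or.inl hc) (Or.inl hLfin)).mp hK
    exact absurd (hKL K) (not_le.mpr this)
  rwa [hL0] at htend

lemma tsum_pQ : ∑' n, pQ μ ξ a b n = 3 * ((a * b : ℕ) : ℝ≥0∞) := by
  have hfin : ∀ n, 3 * eQ μ ξ a b n ≠ ⊤ := by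
    intro n
    refine ENNReal.mul_ne_top (by norm_num) (ne_top_of_le_ne_top ?_
      (eQ_le_zero μ a b hmeas hindep hunif ha hb n))
    rw [eQ_zero μ a b ha hb]
    exact ENNReal.natCast_ne_top _
  have hs : ∀ n, ∑ k ∈ Finset.range n, pQ μ ξ a b k =
      3 * eQ μ ξ a b 0 - 3 * eQ μ ξ a b n := by
    intro n
    exact ENNReal.eq_sub_of_add_eq (hfin n) (partial_sum μ a b hmeas hindep hunif ha hb n)
  have ht : Filter.Tendsto (fun n => ∑ k ∈ Finset.range n, pQ μ ξ a b k) Filter.atTop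
      (nhds (3 * eQ μ ξ a b 0 - 3 * 0)) := by
    simp_rw [hs]
    exact ENNReal.Tendsto.sub tendsto_const_nhds
      (ENNReal.Tendsto.const_mul (eQ_tendsto μ a b hmeas hindep hunif ha hb)
        (Or.inr (by norm_num)))
      (Or.inl (hfin 0))
  have ht' := ENNReal.tendsto_nat_tsum (pQ μ ξ a b)
  have := tendsto_nhds_unique ht' ht
  rw [this, eQ_zero μ a b ha hb]
  simp

end Prob4
end Stmt0Aux

namespace Stmt0Aux

lemma nat_lt_sInf (S : Set ℕ) (n : ℕ) :
    n < sInf S ↔ S.Nonempty ∧ ∀ k ≤ n, k ∉ S := by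
  constructor
  · intro h
    have hne : S.Nonempty := by
      by_contra hc
      rw [Set.not_nonempty_iff_eq_empty] at hc
      rw [hc, Nat.sInf_empty] at h
      omega
    exact ⟨hne, fun k hk hkS => absurd (Nat.sInf_le hkS) (by omega)⟩
  · rintro ⟨hne, h⟩
    by_contra hc
    push_neg at hc
    exact h _ hc (Nat.sInf_mem hne)

lemma nat_cast_tsum (m : ℕ) :
    ∑' n : ℕ, (if n < m then (1 : ℝ≥0∞) else 0) = (m : ℝ≥0∞) := by
  rw [tsum_eq_sum (s := Finset.range m)
    (fun n hn => if_neg (by simpa using Finset.mem_range.not.mp hn))]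
  rw [Finset.sum_congr rfl (fun n hn => if_pos (Finset.mem_range.mp hn))]
  simp

end Stmt0Aux

open Stmt0Aux in
/-- For the three-team competition process started from positive
integer gaps `a` and `b`, the expected value of the first tie time `T` equals `3ab`. -/
theorem stmt_0
    {Ω : Type*} [MeasurableSpace Ω] (μ : Measure Ω) [IsProbabilityMeasure μ]
    (a b : ℕ) (ha : 0 < a) (hb : 0 < b)
    (ξ : ℕ → Ω → ℤ × ℤ)
    (hmeas : ∀ n, Measurable (ξ n))
    (hindep : iIndepFun ξ μ)
    (hunif : ∀ n, ∀ v ∈ ({(-1, 0), (1, -1), (0, 1)} : Set (ℤ × ℤ)),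
      μ {ω | ξ n ω = v} = 1 / 3)
    (A B : ℕ → Ω → ℤ)
    (hA0 : ∀ ω, A 0 ω = (a : ℤ)) (hB0 : ∀ ω, B 0 ω = (b : ℤ))
    (hA : ∀ n ω, A (n + 1) ω = A n ω + (ξ n ω).1)
    (hB : ∀ n ω, B (n + 1) ω = B n ω + (ξ n ω).2)
    (T : Ω → ℕ)
    (hT : ∀ ω, T ω = sInf {n | A n ω * B n ω = 0}) :
    ∫⁻ ω, (T ω : ℝ≥0∞) ∂μ = ((3 * a * b : ℕ) : ℝ≥0∞) := by
  classical
  -- identification of A, B with Aseq, Bseq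
  have hAeq : ∀ n ω, A n ω = Aseq a (trj ξ ω) n := by
    intro n
    induction n with
    | zero => intro ω; rw [hA0]; simp [Aseq]
    | succ m ih => intro ω; rw [hA m ω, ih ω, Aseq_succ]; rfl
  have hBeq : ∀ n ω, B n ω = Bseq b (trj ξ ω) n := by
    intro n
    induction n with
    | zero => intro ω; rw [hB0]; simp [Bseq]
    | succ m ih => intro ω; rw [hB m ω, ih ω, Bseq_succ]; rfl
  -- measurability of A, B
  have hAmeas : ∀ n, Measurable (A n) := by
    intro n
    induction n with
    | zero => simp_rw [show A 0 = fun _ => (a : ℤ) from funext hA0]; exact measurable_const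
    | succ m ih =>
      have : A (m + 1) = fun ω => A m ω + (ξ m ω).1 := funext (hA m)
      rw [this]
      exact ih.add (measurable_fst.comp (hmeas m))
  have hBmeas : ∀ n, Measurable (B n) := by
    intro n
    induction n with
    | zero => simp_rw [show B 0 = fun _ => (b : ℤ) from funext hB0]; exact measurable_const
    | succ m ih =>
      have : B (m + 1) = fun ω => B m ω + (ξ m ω).2 := funext (hB m)
      rw [this]
      exact ih.add (measurable_snd.comp (hmeas m))
  have hABmeas : ∀ m, MeasurableSet {ω | A m ω * B m ω = 0} :=
    fun m => ((hAmeas m).mul (hBmeas m)) (measurableSet_singleton 0)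
  -- the alive sets
  set Dset : ℕ → Set Ω := fun n => {ω | aliveP a b n (trj ξ ω)} with hDset
  have hchiD : ∀ n ω, χseq a b n (trj ξ ω) = Set.indicator (Dset n) 1 ω := by
    intro n ω
    by_cases h : aliveP a b n (trj ξ ω)
    · have h1 : χseq a b n (trj ξ ω) = 1 := if_pos h
      rw [h1, Set.indicator_of_mem (show ω ∈ Dset n from h)]
      rfl
    · have h1 : χseq a b n (trj ξ ω) = 0 := if_neg h
      rw [h1, Set.indicator_of_notMem (show ω ∉ Dset n from h)]
  have hDmeas : ∀ n, MeasurableSet (Dset n) := by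
    intro n
    have : Dset n = (fun ω => χseq a b n (trj ξ ω)) ⁻¹' {1} := by
      ext ω
      by_cases h : aliveP a b n (trj ξ ω) <;>
        simp [hDset, h, χseq, Set.mem_preimage]
    rw [this]
    exact meas_chi a b hmeas n (measurableSet_singleton 1)
  have hpD : ∀ n, μ (Dset n) = pQ μ ξ a b n := by
    intro n
    rw [show pQ μ ξ a b n = ∫⁻ ω, Set.indicator (Dset n) 1 ω ∂μ from
      lintegral_congr (hchiD n), lintegral_indicator_one (hDmeas n)]
  -- null sets
  have hbadV : ∀ k, μ {ω | ¬ inV (ξ k ω)} = 0 := by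
    intro k
    set S1 := {ω | ξ k ω = ((-1 : ℤ), (0 : ℤ))} with hS1
    set S2 := {ω | ξ k ω = ((1 : ℤ), (-1 : ℤ))} with hS2
    set S3 := {ω | ξ k ω = ((0 : ℤ), (1 : ℤ))} with hS3
    have hm1 : MeasurableSet S1 := hmeas k (measurableSet_singleton _)
    have hm2 : MeasurableSet S2 := hmeas k (measurableSet_singleton _)
    have hm3 : MeasurableSet S3 := hmeas k (measurableSet_singleton _)
    have hd23 : Disjoint S2 S3 := by
      rw [Set.disjoint_left]
      intro ω h2 h3
      rw [hS2] at h2; rw [hS3] at h3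
      simp only [Set.mem_setOf_eq] at h2 h3
      rw [h2] at h3; exact absurd h3 (by decide)
    have hd123 : Disjoint S1 (S2 ∪ S3) := by
      rw [Set.disjoint_left]
      intro ω h1 h23
      rw [hS1] at h1
      simp only [Set.mem_setOf_eq] at h1
      rcases h23 with h | h <;> [rw [hS2] at h; rw [hS3] at h] <;>
        simp only [Set.mem_setOf_eq] at h <;> rw [h1] at h <;>
        exact absurd h (by decide)
    have hU : μ (S1 ∪ (S2 ∪ S3)) = 1 := by
      rw [measure_union hd123 (hm2.union hm3), measure_union hd23 hm3,
        hunif k _ (by left; rfl), hunif k _ (by right; left; rfl),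
        hunif k _ (by right; right; rfl)]
      rw [show (1 / 3 + (1 / 3 + 1 / 3) : ℝ≥0∞) = 3 * (1 / 3) by ring, three_third]
    have hcompl : {ω | ¬ inV (ξ k ω)} = (S1 ∪ (S2 ∪ S3))ᶜ := by
      ext ω
      simp only [Set.mem_setOf_eq, Set.mem_compl_iff, Set.mem_union, hS1, hS2, hS3, inV]
    rw [hcompl, measure_compl (hm1.union (hm2.union hm3)) (measure_ne_top μ _), hU,
      measure_univ, tsub_self]
  set Nbad := ⋃ k, {ω | ¬ inV (ξ k ω)} with hNbad
  have hNbad0 : μ Nbad = 0 := measure_iUnion_null hbadV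
  set Ninf := ⋂ n, Dset n with hNinf
  have hNinf0 : μ Ninf = 0 := by
    have hle : ∀ n, μ Ninf ≤ pQ μ ξ a b n := by
      intro n
      rw [← hpD n]
      exact measure_mono (Set.iInter_subset _ n)
    have := ge_of_tendsto (pQ_tendsto μ a b hmeas hindep hunif ha hb)
      (Filter.Eventually.of_forall hle)
    exact le_antisymm this zero_le
  set N := Nbad ∪ Ninf with hN
  have hN0 : μ N = 0 := measure_union_null hNbad0 hNinf0
  -- key pointwise identification
  have hkey : ∀ ω, ω ∉ N → ∀ n, (n < T ω ↔ ω ∈ Dset n) := by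
    intro ω hω n
    have hV : ∀ k, inV (ξ k ω) := by
      intro k
      by_contra hc
      exact hω (Or.inl (Set.mem_iUnion.mpr ⟨k, hc⟩))
    have hnonempty : {m | A m ω * B m ω = 0}.Nonempty := by
      have hni : ω ∉ Ninf := fun hc => hω (Or.inr hc)
      rw [hNinf, Set.mem_iInter] at hni
      push_neg at hni
      obtain ⟨n0, hn0⟩ := hni
      rw [hDset] at hn0
      simp only [Set.mem_setOf_eq, aliveP, not_and_or] at hn0
      rcases hn0 with h | h
      · push_neg at h
        obtain ⟨k, _, hk⟩ := h
        exact ⟨k, by rw [Set.mem_setOf_eq, hAeq, hBeq]; exact hk⟩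
      · exact absurd (fun k _ => hV k) h
    rw [hT, nat_lt_sInf]
    constructor
    · rintro ⟨-, h⟩
      refine ⟨fun k hk => ?_, fun k _ => hV k⟩
      have := h k hk
      rw [Set.mem_setOf_eq, hAeq, hBeq] at this
      exact this
    · rintro ⟨h1, -⟩
      refine ⟨hnonempty, fun k hk hkS => ?_⟩
      rw [Set.mem_setOf_eq, hAeq, hBeq] at hkS
      exact h1 k hk hkS
  -- measure of the level sets of T
  have hTmeas : ∀ n, MeasurableSet {ω | n < T ω} := by
    intro n
    have heq : {ω | n < T ω} =
        (⋃ m, {ω | A m ω * B m ω = 0}) ∩ ⋂ k, ⋂ (_ : k ≤ n), {ω | A k ω * B k ω = 0}ᶜ := by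
      ext ω
      rw [Set.mem_setOf_eq, hT, nat_lt_sInf]
      simp only [Set.mem_inter_iff, Set.mem_iUnion, Set.mem_iInter, Set.mem_compl_iff,
        Set.mem_setOf_eq, Set.Nonempty]
    rw [heq]
    exact (MeasurableSet.iUnion hABmeas).inter
      (MeasurableSet.iInter fun k => MeasurableSet.iInter fun _ => (hABmeas k).compl)
  have hmuT : ∀ n, μ {ω | n < T ω} = pQ μ ξ a b n := by
    intro n
    have h1 : {ω | n < T ω} ⊆ Dset n ∪ N := by
      intro ω hω
      by_cases hN' : ω ∈ N
      · exact Or.inr hN'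
      · exact Or.inl ((hkey ω hN' n).mp hω)
    have h2 : Dset n ⊆ {ω | n < T ω} ∪ N := by
      intro ω hω
      by_cases hN' : ω ∈ N
      · exact Or.inr hN'
      · exact Or.inl ((hkey ω hN' n).mpr hω)
    have hle1 : μ {ω | n < T ω} ≤ μ (Dset n) := by
      calc μ {ω | n < T ω} ≤ μ (Dset n ∪ N) := measure_mono h1
        _ ≤ μ (Dset n) + μ N := measure_union_le _ _
        _ = μ (Dset n) := by rw [hN0, add_zero]
    have hle2 : μ (Dset n) ≤ μ {ω | n < T ω} := by
      calc μ (Dset n) ≤ μ ({ω | n < T ω} ∪ N) := measure_mono h2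
        _ ≤ μ {ω | n < T ω} + μ N := measure_union_le _ _
        _ = μ {ω | n < T ω} := by rw [hN0, add_zero]
    rw [le_antisymm hle1 hle2, hpD n]
  -- final computation
  have hTpt : (fun ω => (T ω : ℝ≥0∞)) =
      fun ω => ∑' n : ℕ, Set.indicator {ω' | n < T ω'} (fun _ => (1 : ℝ≥0∞)) ω := by
    funext ω
    rw [← nat_cast_tsum (T ω)]
    congr 1
    funext n
    by_cases h : n < T ω
    · rw [Set.indicator_of_mem (show ω ∈ {ω' | n < T ω'} from h)]
      exact if_pos h
    · rw [Set.indicator_of_notMem (show ω ∉ {ω' | n < T ω'} from h)]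
      exact if_neg h
  rw [show ∫⁻ ω, (T ω : ℝ≥0∞) ∂μ =
      ∫⁻ ω, ∑' n : ℕ, Set.indicator {ω' | n < T ω'} (fun _ => (1 : ℝ≥0∞)) ω ∂μ from by
        rw [← hTpt],
    lintegral_tsum (fun n => (measurable_const.indicator (hTmeas n)).aemeasurable)]
  have hterm : ∀ n : ℕ,
      ∫⁻ ω, Set.indicator {ω' | n < T ω'} (fun _ => (1 : ℝ≥0∞)) ω ∂μ = pQ μ ξ a b n := by
    intro n
    rw [← hmuT n]
    exact lintegral_indicator_one (hTmeas n)
  rw [tsum_congr hterm, tsum_pQ μ a b hmeas hindep hunif ha hb]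
  push_cast
  ring
end

section
/- If m ≥ 4, then E[T] ≤ m · min{a_i·a_{i+1} : 1 ≤ i ≤ m−2}. -/
open MeasureTheory ProbabilityTheory Filter
open scoped ENNReal

/-- The `m` possible step vectors of the competition process on the `m - 1` gaps
(0-indexed): `step m 0 = -e₀`, `step m k = e_{k-1} - e_k` for `0 < k < m - 1`, and
`step m (m-1) = e_{m-2}`. -/
def step (m : ℕ) (k : Fin m) : Fin (m - 1) → ℤ := fun j =>
  (if (j : ℕ) + 1 = (k : ℕ) then 1 else 0) - (if (j : ℕ) = (k : ℕ) then 1 else 0)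

lemma step_bound (m : ℕ) (k : Fin m) (j : Fin (m-1)) :
    -1 ≤ step m k j ∧ step m k j ≤ 1 := by
  unfold step; split_ifs <;> omega

lemma step_injective (m : ℕ) : Function.Injective (step m) := by
  intro k k' h
  by_contra hne
  have hne' : (k : ℕ) ≠ (k' : ℕ) := fun hc => hne (Fin.ext hc)
  wlog hlt : (k : ℕ) < (k' : ℕ) generalizing k k'
  · exact this h.symm (Ne.symm hne) (fun hc => hne (Fin.ext hc.symm)) (by omega)
  · have hj : (k : ℕ) < m - 1 := by have := k'.isLt; omega
    have := congrFun h ⟨k, hj⟩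
    simp only [step, Fin.val_mk] at this
    split_ifs at this <;> omega

lemma sum_step (m : ℕ) (j : Fin (m-1)) : ∑ k : Fin m, step m k j = 0 := by
  have hj1 : (j : ℕ) + 1 < m := by have := j.isLt; omega
  have hj0 : (j : ℕ) < m := by omega
  unfold step
  rw [Finset.sum_sub_distrib]
  have h1 : ∑ k : Fin m, (if (j : ℕ) + 1 = (k : ℕ) then (1:ℤ) else 0) = 1 := by
    rw [Finset.sum_eq_single (⟨(j:ℕ)+1, hj1⟩ : Fin m)]
    · simp
    · intro b _ hb
      have hb' : (b : ℕ) ≠ (j:ℕ)+1 := by simpa [Fin.ext_iff] using hb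
      rw [if_neg (by omega)]
    · simp
  have h2 : ∑ k : Fin m, (if (j : ℕ) = (k : ℕ) then (1:ℤ) else 0) = 1 := by
    rw [Finset.sum_eq_single (⟨(j:ℕ), hj0⟩ : Fin m)]
    · simp
    · intro b _ hb
      have hb' : (b : ℕ) ≠ (j:ℕ) := by simpa [Fin.ext_iff] using hb
      rw [if_neg (by omega)]
    · simp
  rw [h1, h2]; ring

lemma sum_step_mul (m : ℕ) (i j : Fin (m-1)) (hij : (j : ℕ) = (i : ℕ) + 1) :
    ∑ k : Fin m, step m k i * step m k j = -1 := by
  have hi1 : (i : ℕ) + 1 < m := by have := j.isLt; omega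
  rw [Finset.sum_eq_single (⟨(i:ℕ)+1, hi1⟩ : Fin m)]
  · unfold step
    simp only [Fin.val_mk]
    split_ifs <;> omega
  · intro b _ hb
    have hb' : (b : ℕ) ≠ (i : ℕ) + 1 := by simpa [Fin.ext_iff] using hb
    unfold step
    split_ifs <;> omega
  · simp

set_option maxHeartbeats 3200000 in
/-- For `m ≥ 4` teams, the expected value of the first tie time `T`
is at most `m` times the minimum of the products of adjacent initial gaps. -/
theorem stmt_1 (m : ℕ) (hm : 4 ≤ m)
{Ω : Type*} [MeasurableSpace Ω] (μ : Measure Ω) [IsProbabilityMeasure μ]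
    (a : Fin (m - 1) → ℕ) (ha : ∀ k, 0 < a k)
    (ξ : ℕ → Ω → (Fin (m - 1) → ℤ))
    (hmeas : ∀ n, Measurable (ξ n))
    (hindep : iIndepFun ξ μ)
    (hunif : ∀ n (k : Fin m), μ {ω | ξ n ω = step m k} = 1 / m)
    (A : ℕ → Ω → (Fin (m - 1) → ℤ))
    (hA0 : ∀ ω j, A 0 ω j = (a j : ℤ))
    (hA : ∀ n ω, A (n + 1) ω = A n ω + ξ n ω)
    (T : Ω → ℕ)
    (hT : ∀ ω, T ω = sInf {n | (∏ j, A n ω j) = 0}) :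
    ∫⁻ ω, (T ω : ℝ≥0∞) ∂μ
      ≤ (m : ℝ≥0∞) * ⨅ (i : Fin (m - 1)) (j : Fin (m - 1)) (_ : (j : ℕ) = (i : ℕ) + 1),
          ((a i : ℝ≥0∞) * (a j : ℝ≥0∞)) := by
  classical
  have hm0 : (m : ℝ≥0∞) ≠ 0 := by positivity
  have hmtop : (m : ℝ≥0∞) ≠ ⊤ := ENNReal.natCast_ne_top m
  have hmR : (0:ℝ) < m := by positivity
  have hAeq : ∀ n ω, A n ω = fun jj => (a jj : ℤ) + ∑ l ∈ Finset.range n, ξ l ω jj := by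
    intro n
    induction n with
    | zero => intro ω; funext jj; simp [hA0]
    | succ n ih =>
      intro ω; funext jj
      rw [hA n ω, Pi.add_apply, ih ω]
      simp [Finset.sum_range_succ]; ring
  have hAmeas : ∀ n, Measurable (A n) := by
    intro n
    have : A n = fun ω jj => (a jj : ℤ) + ∑ l ∈ Finset.range n, ξ l ω jj := by
      funext ω; exact hAeq n ω
    rw [this]
    exact measurable_pi_lambda _ fun jj =>
      measurable_const.add (Finset.measurable_sum _ fun l _ => (measurable_pi_apply jj).comp (hmeas l))
  have prodmeas : ∀ n, Measurable fun ω => ∏ jj, A n ω jj := fun n =>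
    Finset.measurable_prod _ fun jj _ => (measurable_pi_apply jj).comp (hAmeas n)
  obtain ⟨good, hgood⟩ : ∃ g : ℕ → Set Ω, ∀ n, g n = ⋃ k : Fin m, ξ n ⁻¹' {step m k} :=
    ⟨_, fun _ => rfl⟩
  have hgoodmeas : ∀ n, MeasurableSet (good n) := fun n => by
    rw [hgood]
    exact MeasurableSet.iUnion fun k => (hmeas n) (measurableSet_singleton _)
  have hgoodfull : ∀ n, μ (good n) = 1 := by
    intro n
    rw [hgood]
    rw [measure_iUnion (fun k k' hne => Set.disjoint_iff_inter_eq_empty.mpr (by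
        ext ω; simp only [Set.mem_inter_iff, Set.mem_preimage, Set.mem_singleton_iff,
          Set.mem_empty_iff_false, iff_false, not_and]
        intro h1 h2; exact hne (step_injective m (h1 ▸ h2 ▸ rfl))))
      (fun k => (hmeas n) (measurableSet_singleton _))]
    have : ∀ k : Fin m, μ (ξ n ⁻¹' {step m k}) = 1 / m := fun k => hunif n k
    rw [tsum_fintype]
    simp only [this]
    rw [Finset.sum_const, Finset.card_univ, Fintype.card_fin, nsmul_eq_mul, one_div,
      ENNReal.mul_inv_cancel hm0 hmtop]
  obtain ⟨B, hB⟩ : ∃ B : ℕ → Set Ω, ∀ n, B n = {ω | ∀ l ≤ n, (∏ jj, A l ω jj) ≠ 0} :=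
    ⟨_, fun _ => rfl⟩
  have hBmeas : ∀ n, MeasurableSet (B n) := by
    intro n
    have : B n = ⋂ l, ⋂ (_ : l ≤ n), {ω | (∏ jj, A l ω jj) = 0}ᶜ := by
      rw [hB]; ext ω; simp
    rw [this]
    exact MeasurableSet.iInter fun l => MeasurableSet.iInter fun _ =>
      ((prodmeas l) (measurableSet_singleton 0)).compl
  obtain ⟨E, hE0, hEs⟩ : ∃ E : ℕ → Set Ω, E 0 = Set.univ ∧ ∀ n, E (n+1) = E n ∩ good n :=
    ⟨fun n => Nat.rec Set.univ (fun n En => En ∩ good n) n, rfl, fun _ => rfl⟩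
  have hEmem : ∀ n ω, ω ∈ E n ↔ ∀ l < n, ω ∈ good l := by
    intro n
    induction n with
    | zero => intro ω; simp [hE0]
    | succ n ih =>
      intro ω
      rw [hEs, Set.mem_inter_iff, ih ω]
      constructor
      · rintro ⟨h1, h2⟩ l hl
        rcases Nat.lt_succ_iff_lt_or_eq.mp hl with h | h
        · exact h1 l h
        · exact h ▸ h2
      · intro h
        exact ⟨fun l hl => h l (hl.trans (Nat.lt_succ_self n)), h n (Nat.lt_succ_self n)⟩
  have hEmeas : ∀ n, MeasurableSet (E n) := by
    intro n
    induction n with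
    | zero => rw [hE0]; exact MeasurableSet.univ
    | succ n ih => rw [hEs]; exact ih.inter (hgoodmeas n)
  have hEfull : ∀ n, μ (E n) = 1 := by
    intro n
    induction n with
    | zero => rw [hE0]; exact measure_univ
    | succ n ih =>
      rw [hEs]
      rw [← prob_compl_eq_zero_iff ((hEmeas n).inter (hgoodmeas n))]
      rw [Set.compl_inter]
      refine le_antisymm ((measure_union_le _ _).trans ?_) zero_le
      rw [prob_compl_eq_zero_iff (hEmeas n) |>.mpr ih,
        prob_compl_eq_zero_iff (hgoodmeas n) |>.mpr (hgoodfull n)]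
      simp
  have hpos : ∀ n ω, (∀ l < n, ω ∈ good l) → (∀ l < n, (∏ jj, A l ω jj) ≠ 0) →
      ∀ jj, 0 ≤ A n ω jj := by
    intro n
    induction n with
    | zero => intro ω _ _ jj; rw [hA0]; positivity
    | succ n ih =>
      intro ω hg hprod jj
      have h1 : ∀ jj, 0 ≤ A n ω jj :=
        ih ω (fun l hl => hg l (hl.trans (Nat.lt_succ_self n)))
          (fun l hl => hprod l (hl.trans (Nat.lt_succ_self n)))
      have h2 : A n ω jj ≠ 0 := by
        have := hprod n (Nat.lt_succ_self n)
        exact fun hc => this (Finset.prod_eq_zero (Finset.mem_univ jj) hc)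
      have h3 : 1 ≤ A n ω jj := lt_of_le_of_ne (h1 jj) (Ne.symm h2)
      have h4 : -1 ≤ ξ n ω jj := by
        have := hg n (Nat.lt_succ_self n)
        rw [hgood] at this
        obtain ⟨s, ⟨k, rfl⟩, hs⟩ := this
        simp only [Set.mem_preimage, Set.mem_singleton_iff] at hs
        rw [hs]
        exact (step_bound m k jj).1
      rw [hA n ω, Pi.add_apply]
      omega
  have hbd : ∀ n ω, (∀ l < n, ω ∈ good l) → ∀ jj, |A n ω jj| ≤ (a jj : ℤ) + n := by
    intro n
    induction n with
    | zero => intro ω _ jj; rw [hA0]; simp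
    | succ n ih =>
      intro ω hg jj
      have h1 := ih ω (fun l hl => hg l (hl.trans (Nat.lt_succ_self n))) jj
      have h4 : -1 ≤ ξ n ω jj ∧ ξ n ω jj ≤ 1 := by
        have := hg n (Nat.lt_succ_self n)
        rw [hgood] at this
        obtain ⟨s, ⟨k, rfl⟩, hs⟩ := this
        simp only [Set.mem_preimage, Set.mem_singleton_iff] at hs
        rw [hs]
        exact step_bound m k jj
      rw [hA n ω, Pi.add_apply]
      rw [abs_le] at h1 ⊢
      push_cast
      push_cast at h1
      constructor <;> linarith [h4.1, h4.2]
  have hgoodiff : ∀ l (ω : Ω), ω ∈ good l ↔ ∃ k, ξ l ω = step m k := by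
    intro l ω; rw [hgood]; simp [Set.mem_iUnion]
  have key : ∀ i j : Fin (m - 1), (j : ℕ) = (i : ℕ) + 1 →
      ∫⁻ ω, (T ω : ℝ≥0∞) ∂μ ≤ (m : ℝ≥0∞) * ((a i : ℝ≥0∞) * (a j : ℝ≥0∞)) := by
    intro i j hij
    obtain ⟨X, hX⟩ : ∃ X : ℕ → Ω → ℤ, ∀ n ω, X n ω = A n ω i * A n ω j := ⟨_, fun _ _ => rfl⟩
    obtain ⟨Y, hY0, hYs⟩ : ∃ Y : ℕ → Ω → ℤ, (∀ ω, Y 0 ω = X 0 ω) ∧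
        ∀ n ω, Y (n+1) ω = Y n ω + (B n).indicator (fun ω => X (n+1) ω - X n ω) ω :=
      ⟨fun n => Nat.rec (X 0) (fun n Yn ω => Yn ω + (B n).indicator (fun ω => X (n+1) ω - X n ω) ω) n,
        fun _ => rfl, fun _ _ => rfl⟩
    have hXmeas : ∀ n, Measurable (X n) := by
      intro n
      have : X n = fun ω => A n ω i * A n ω j := funext fun ω => hX n ω
      rw [this]
      exact ((measurable_pi_apply i).comp (hAmeas n)).mul ((measurable_pi_apply j).comp (hAmeas n))
    have hYmeas : ∀ n, Measurable (Y n) := by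
      intro n
      induction n with
      | zero =>
        have : Y 0 = X 0 := funext fun ω => hY0 ω
        rw [this]; exact hXmeas 0
      | succ n ih =>
        have : Y (n+1) = fun ω => Y n ω + (B n).indicator (fun ω => X (n+1) ω - X n ω) ω :=
          funext fun ω => hYs n ω
        rw [this]
        exact ih.add (((hXmeas (n+1)).sub (hXmeas n)).indicator (hBmeas n))
    have hYX : ∀ n ω, (∀ l < n, ω ∈ good l) →
        0 ≤ Y n ω ∧ ((∀ l < n, (∏ jj, A l ω jj) ≠ 0) → Y n ω = X n ω) := by
      intro n
      induction n with
      | zero =>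
        intro ω _
        refine ⟨?_, fun _ => hY0 ω⟩
        rw [hY0, hX, hA0, hA0]; positivity
      | succ n ih =>
        intro ω hg
        have ihω := ih ω (fun l hl => hg l (hl.trans (Nat.lt_succ_self n)))
        by_cases hBn : ω ∈ B n
        · have hprod : ∀ l ≤ n, (∏ jj, A l ω jj) ≠ 0 := by rwa [hB] at hBn
          have hYnX : Y n ω = X n ω := ihω.2 (fun l hl => hprod l (by omega))
          have hval : Y (n+1) ω = X (n+1) ω := by
            rw [hYs, Set.indicator_of_mem hBn, hYnX]; ring
          constructor
          · rw [hval, hX]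
            have := hpos (n+1) ω hg (fun l hl => hprod l (by omega))
            exact mul_nonneg (this i) (this j)
          · intro _; exact hval
        · have hval : Y (n+1) ω = Y n ω := by
            rw [hYs, Set.indicator_of_notMem hBn]; ring
          refine ⟨hval ▸ ihω.1, fun hprod => ?_⟩
          exact absurd (by rw [hB]; intro l hl; exact hprod l (by omega)) hBn
    have hYbd : ∀ n ω, (∀ l < n, ω ∈ good l) →
        |Y n ω| ≤ ((a i : ℤ) + n) * ((a j : ℤ) + n) := by
      intro n
      induction n with
      | zero =>
        intro ω _
        rw [hY0, hX, hA0, hA0]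
        push_cast
        rw [abs_of_nonneg (by positivity)]
        simp
      | succ n ih =>
        intro ω hg
        have hgn : ∀ l < n, ω ∈ good l := fun l hl => hg l (hl.trans (Nat.lt_succ_self n))
        by_cases hBn : ω ∈ B n
        · have hprod : ∀ l ≤ n, (∏ jj, A l ω jj) ≠ 0 := by rwa [hB] at hBn
          have hYnX : Y n ω = X n ω := (hYX n ω hgn).2 (fun l hl => hprod l (by omega))
          have hval : Y (n+1) ω = X (n+1) ω := by
            rw [hYs, Set.indicator_of_mem hBn, hYnX]; ring
          rw [hval, hX]
          have h1 := hbd (n+1) ω hg i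
          have h2 := hbd (n+1) ω hg j
          rw [abs_mul]
          push_cast at h1 h2 ⊢
          have := abs_nonneg (A (n+1) ω i)
          have := abs_nonneg (A (n+1) ω j)
          nlinarith
        · have hval : Y (n+1) ω = Y n ω := by
            rw [hYs, Set.indicator_of_notMem hBn]; ring
          rw [hval]
          refine (ih ω hgn).trans ?_
          have h1 : (0:ℤ) ≤ (a i : ℤ) + n := by positivity
          have h2 : (0:ℤ) ≤ (a j : ℤ) + n := by positivity
          push_cast
          nlinarith
    have hWint : ∀ n, Integrable ((E n).indicator (fun ω => (Y n ω : ℝ))) μ := by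
      intro n
      refine (integrable_const ((((a i : ℝ) + n) * ((a j : ℝ) + n)))).mono'
        ((measurable_from_top.comp (hYmeas n)).indicator (hEmeas n)).aestronglyMeasurable
        (ae_of_all _ fun ω => ?_)
      by_cases hω : ω ∈ E n
      · rw [Set.indicator_of_mem hω]
        have := hYbd n ω ((hEmem n ω).mp hω)
        rw [Real.norm_eq_abs, ← Int.cast_abs]
        calc ((|Y n ω| : ℤ) : ℝ) ≤ (((a i : ℤ) + n) * ((a j : ℤ) + n) : ℤ) := by exact_mod_cast this
          _ = ((a i : ℝ) + n) * ((a j : ℝ) + n) := by push_cast; ring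
      · rw [Set.indicator_of_notMem hω]
        simp only [norm_zero]
        positivity
    have hstep : ∀ n, ∫ ω, (E (n+1)).indicator (fun ω => (Y (n+1) ω : ℝ)) ω ∂μ
        = ∫ ω, (E n).indicator (fun ω => (Y n ω : ℝ)) ω ∂μ - (1 / m) * (μ (B n)).toReal := by
      intro n
      -- the increment function
      set f : Ω → ℝ := (E (n+1) ∩ B n).indicator (fun ω => ((X (n+1) ω - X n ω : ℤ) : ℝ)) with hf
      have hEn1sub : E (n+1) ⊆ E n := by rw [hEs]; exact Set.inter_subset_left
      have hEn1good : E (n+1) ⊆ good n := by rw [hEs]; exact Set.inter_subset_right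
      -- decomposition of the new integrand
      have claim1 : ∀ ω, (E (n+1)).indicator (fun ω => (Y (n+1) ω : ℝ)) ω
          = (E (n+1)).indicator (fun ω => (Y n ω : ℝ)) ω + f ω := by
        intro ω
        by_cases h1 : ω ∈ E (n+1)
        · rw [Set.indicator_of_mem h1, Set.indicator_of_mem h1]
          by_cases h2 : ω ∈ B n
          · rw [hf, Set.indicator_of_mem (Set.mem_inter h1 h2), hYs n ω, Set.indicator_of_mem h2]
            push_cast; ring
          · rw [hf, Set.indicator_of_notMem (fun hc => h2 hc.2), hYs n ω,
              Set.indicator_of_notMem h2]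
            push_cast; ring
        · rw [Set.indicator_of_notMem h1, Set.indicator_of_notMem h1, hf,
            Set.indicator_of_notMem (fun hc => h1 hc.1)]
          ring
      -- integrability of the middle term
      have hint2 : Integrable ((E (n+1)).indicator (fun ω => (Y n ω : ℝ))) μ := by
        refine (integrable_const ((((a i : ℝ) + n) * ((a j : ℝ) + n)))).mono'
          ((measurable_from_top.comp (hYmeas n)).indicator (hEmeas (n+1))).aestronglyMeasurable
          (ae_of_all _ fun ω => ?_)
        by_cases hω : ω ∈ E (n+1)
        · rw [Set.indicator_of_mem hω]
          have := hYbd n ω (fun l hl => ((hEmem (n+1) ω).mp hω) l (by omega))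
          rw [Real.norm_eq_abs, ← Int.cast_abs]
          calc ((|Y n ω| : ℤ) : ℝ) ≤ (((a i : ℤ) + n) * ((a j : ℤ) + n) : ℤ) := by exact_mod_cast this
            _ = ((a i : ℝ) + n) * ((a j : ℝ) + n) := by push_cast; ring
        · rw [Set.indicator_of_notMem hω]; simp only [norm_zero]; positivity
      -- integrability of the increment
      have hintf : Integrable f μ := by
        refine (integrable_const ((((a i : ℝ) + (n+1)) * ((a j : ℝ) + (n+1))
            + ((a i : ℝ) + n) * ((a j : ℝ) + n)))).mono'
          ((measurable_from_top.comp ((hXmeas (n+1)).sub (hXmeas n))).indicator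
            ((hEmeas (n+1)).inter (hBmeas n))).aestronglyMeasurable
          (ae_of_all _ fun ω => ?_)
        by_cases hω : ω ∈ E (n+1) ∩ B n
        · rw [hf, Set.indicator_of_mem hω]
          have hgd : ∀ l < n + 1, ω ∈ good l := (hEmem (n+1) ω).mp hω.1
          have h1i := hbd (n+1) ω hgd i
          have h1j := hbd (n+1) ω hgd j
          have h2i := hbd n ω (fun l hl => hgd l (by omega)) i
          have h2j := hbd n ω (fun l hl => hgd l (by omega)) j
          rw [Real.norm_eq_abs, ← Int.cast_abs]
          have hz : |X (n+1) ω - X n ω| ≤ ((a i : ℤ) + (n+1)) * ((a j : ℤ) + (n+1))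
              + ((a i : ℤ) + n) * ((a j : ℤ) + n) := by
            rw [hX, hX]
            calc |A (n+1) ω i * A (n+1) ω j - A n ω i * A n ω j|
                ≤ |A (n+1) ω i * A (n+1) ω j| + |A n ω i * A n ω j| := abs_sub _ _
              _ ≤ ((a i : ℤ) + (n+1)) * ((a j : ℤ) + (n+1)) + ((a i : ℤ) + n) * ((a j : ℤ) + n) := by
                  rw [abs_mul, abs_mul]
                  have := abs_nonneg (A (n+1) ω i); have := abs_nonneg (A (n+1) ω j)
                  have := abs_nonneg (A n ω i); have := abs_nonneg (A n ω j)
                  push_cast at h1i h1j h2i h2j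
                  gcongr
          calc ((|X (n+1) ω - X n ω| : ℤ) : ℝ)
              ≤ ((((a i : ℤ) + (n+1)) * ((a j : ℤ) + (n+1))
                + ((a i : ℤ) + n) * ((a j : ℤ) + n) : ℤ) : ℝ) := by exact_mod_cast hz
            _ = ((a i : ℝ) + (n+1)) * ((a j : ℝ) + (n+1)) + ((a i : ℝ) + n) * ((a j : ℝ) + n) := by
                push_cast; ring
        · rw [hf, Set.indicator_of_notMem hω]; simp only [norm_zero]; positivity
      have hdecomp : ∫ ω, (E (n+1)).indicator (fun ω => (Y (n+1) ω : ℝ)) ω ∂μ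
          = ∫ ω, (E (n+1)).indicator (fun ω => (Y n ω : ℝ)) ω ∂μ + ∫ ω, f ω ∂μ := by
        rw [← integral_add hint2 hintf]
        exact integral_congr_ae (ae_of_all _ claim1)
      have hgoodae : ∀ᵐ ω ∂μ, ω ∈ good n := by
        rw [ae_iff]
        exact (prob_compl_eq_zero_iff (hgoodmeas n)).mpr (hgoodfull n)
      have h2eq : ∫ ω, (E (n+1)).indicator (fun ω => (Y n ω : ℝ)) ω ∂μ
          = ∫ ω, (E n).indicator (fun ω => (Y n ω : ℝ)) ω ∂μ := by
        refine integral_congr_ae ?_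
        filter_upwards [hgoodae] with ω hgn
        by_cases hEn' : ω ∈ E n
        · rw [Set.indicator_of_mem hEn', Set.indicator_of_mem (by rw [hEs]; exact ⟨hEn', hgn⟩)]
        · rw [Set.indicator_of_notMem hEn', Set.indicator_of_notMem (fun hc => hEn' (hEn1sub hc))]
      have hgoodiff : ∀ l (ω : Ω), ω ∈ good l ↔ ∃ k, ξ l ω = step m k := by
        intro l ω; rw [hgood]; simp [Set.mem_iUnion]
      have hmain : ∫ ω, f ω ∂μ = -(1 / m) * (μ (B n)).toReal := by
        set zD : Fin m → Ω → ℤ := fun k ω =>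
          A n ω i * step m k j + A n ω j * step m k i + step m k i * step m k j with hzD
        set F : Fin m → Ω → ℝ := fun k ω => (((E n ∩ B n).indicator (zD k) ω : ℤ) : ℝ) with hF
        set G : Fin m → Ω → ℝ := fun k => (ξ n ⁻¹' {step m k}).indicator (fun _ => (1:ℝ)) with hG
        have hENB : MeasurableSet (E n ∩ B n) := (hEmeas n).inter (hBmeas n)
        -- pointwise decomposition of f
        have hpoint : ∀ ω, f ω = ∑ k : Fin m, F k ω * G k ω := by
          intro ω
          by_cases hgn : ω ∈ good n
          · obtain ⟨k0, hk0⟩ := (hgoodiff n ω).mp hgn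
            have hsum : ∑ k : Fin m, F k ω * G k ω = F k0 ω := by
              rw [Finset.sum_eq_single k0]
              · simp only [hG]
                rw [Set.indicator_of_mem (show ω ∈ ξ n ⁻¹' {step m k0} from hk0), mul_one]
              · intro b _ hb
                have hnm : ω ∉ ξ n ⁻¹' {step m b} := by
                  intro hc
                  simp only [Set.mem_preimage, Set.mem_singleton_iff] at hc
                  exact hb (step_injective m (hc.symm.trans hk0))
                simp only [hG]
                rw [Set.indicator_of_notMem hnm, mul_zero]
              · intro h; exact absurd (Finset.mem_univ k0) h
            rw [hsum]
            by_cases hEB : ω ∈ E n ∩ B n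
            · have hmem1 : ω ∈ E (n+1) ∩ B n :=
                ⟨by rw [hEs]; exact ⟨hEB.1, hgn⟩, hEB.2⟩
              rw [hf, Set.indicator_of_mem hmem1]
              simp only [hF]
              rw [Set.indicator_of_mem hEB]
              have hzd : X (n+1) ω - X n ω = zD k0 ω := by
                have hi' : A (n+1) ω i = A n ω i + step m k0 i := by
                  rw [hA n ω, Pi.add_apply, hk0]
                have hj' : A (n+1) ω j = A n ω j + step m k0 j := by
                  rw [hA n ω, Pi.add_apply, hk0]
                rw [hzD, hX, hX, hi', hj']; ring
              rw [hzd]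
            · rw [hf, Set.indicator_of_notMem (fun hc => hEB ⟨hEn1sub hc.1, hc.2⟩)]
              simp only [hF]
              rw [Set.indicator_of_notMem hEB]
              norm_num
          · rw [hf, Set.indicator_of_notMem (fun hc => hgn (hEn1good hc.1))]
            symm
            refine Finset.sum_eq_zero fun k _ => ?_
            have hnm : ω ∉ ξ n ⁻¹' {step m k} := fun hc => hgn ((hgoodiff n ω).mpr ⟨k, hc⟩)
            simp only [hG]
            rw [Set.indicator_of_notMem hnm, mul_zero]
        -- the independence structure
        have hdisj : Disjoint (Finset.range n) ({n} : Finset ℕ) := by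
          simp only [Finset.disjoint_left, Finset.mem_range, Finset.mem_singleton]
          omega
        have base := hindep.indepFun_finset (Finset.range n) {n} hdisj hmeas
        set ext : ({ x : ℕ // x ∈ Finset.range n } → Fin (m-1) → ℤ) → ℕ → Fin (m-1) → ℤ :=
          fun v l => if h : l ∈ Finset.range n then v ⟨l, h⟩ else 0 with hext
        set AA : ({ x : ℕ // x ∈ Finset.range n } → Fin (m-1) → ℤ) → ℕ → Fin (m-1) → ℤ :=
          fun v l jj => (a jj : ℤ) + ∑ p ∈ Finset.range l, ext v p jj with hAA
        set Sset : Set ({ x : ℕ // x ∈ Finset.range n } → Fin (m-1) → ℤ) :=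
          {v | (∀ l < n, ∃ k', ext v l = step m k') ∧ (∀ l ≤ n, (∏ jj, AA v l jj) ≠ 0)} with hSset
        set DZ : Fin m → ({ x : ℕ // x ∈ Finset.range n } → Fin (m-1) → ℤ) → ℤ := fun k v =>
          AA v n i * step m k j + AA v n j * step m k i + step m k i * step m k j with hDZ
        set Φ : Fin m → ({ x : ℕ // x ∈ Finset.range n } → Fin (m-1) → ℤ) → ℝ :=
          fun k v => ((Sset.indicator (DZ k) v : ℤ) : ℝ) with hΦ
        set Ψ : Fin m → ({ x : ℕ // x ∈ ({n} : Finset ℕ) } → Fin (m-1) → ℤ) → ℝ :=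
          fun k => ((fun v : { x : ℕ // x ∈ ({n} : Finset ℕ) } → Fin (m-1) → ℤ =>
            v ⟨n, Finset.mem_singleton_self n⟩) ⁻¹' {step m k}).indicator (fun _ => (1:ℝ)) with hΨ
        have hextm : ∀ p, Measurable fun v : { x : ℕ // x ∈ Finset.range n } → Fin (m-1) → ℤ =>
            ext v p := by
          intro p
          by_cases h : p ∈ Finset.range n
          · simp only [hext, dif_pos h]
            exact measurable_pi_apply _
          · simp only [hext, dif_neg h]
            exact measurable_const
        have hAAm : ∀ l, Measurable fun v => AA v l := by
          intro l
          exact measurable_pi_lambda _ fun jj =>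
            measurable_const.add
              (Finset.measurable_sum _ fun p _ => (measurable_pi_apply jj).comp (hextm p))
        have hSsetm : MeasurableSet Sset := by
          have hrw : Sset = (⋂ l, ⋂ (_ : l < n), ⋃ k' : Fin m, (fun v => ext v l) ⁻¹' {step m k'})
              ∩ (⋂ l, ⋂ (_ : l ≤ n), ((fun v => ∏ jj, AA v l jj) ⁻¹' {0})ᶜ) := by
            ext v
            simp only [hSset, Set.mem_setOf_eq, Set.mem_inter_iff, Set.mem_iInter, Set.mem_iUnion,
              Set.mem_preimage, Set.mem_singleton_iff, Set.mem_compl_iff]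
          rw [hrw]
          exact ((MeasurableSet.iInter fun l => MeasurableSet.iInter fun _ =>
              MeasurableSet.iUnion fun k' => (hextm l) (measurableSet_singleton _)).inter
            (MeasurableSet.iInter fun l => MeasurableSet.iInter fun _ =>
              ((Finset.measurable_prod _ fun jj _ =>
                (measurable_pi_apply jj).comp (hAAm l)) (measurableSet_singleton 0)).compl))
        have hDZm : ∀ k, Measurable (DZ k) := by
          intro k
          simp only [hDZ]
          exact ((((measurable_pi_apply i).comp (hAAm n)).mul_const _).add
            (((measurable_pi_apply j).comp (hAAm n)).mul_const _)).add measurable_const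
        have hΦm : ∀ k, Measurable (Φ k) := fun k =>
          (Measurable.of_discrete (f := fun z : ℤ => (z : ℝ))).comp ((hDZm k).indicator hSsetm)
        have hΨm : ∀ k, Measurable (Ψ k) := fun k =>
          measurable_const.indicator ((measurable_pi_apply _) (measurableSet_singleton _))
        have htupS : Measurable fun ω => (fun l : { x : ℕ // x ∈ Finset.range n } => ξ l ω) :=
          measurable_pi_lambda _ fun l => hmeas l
        have hFeq : ∀ k, F k = fun ω => Φ k (fun l : { x : ℕ // x ∈ Finset.range n } => ξ l ω) := by
          intro k; funext ω
          have hexteq : ∀ p, p < n →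
              ext (fun l : { x : ℕ // x ∈ Finset.range n } => ξ l ω) p = ξ p ω := by
            intro p hp
            simp only [hext, dif_pos (Finset.mem_range.mpr hp)]
          have hAAeq : ∀ l, l ≤ n →
              AA (fun l : { x : ℕ // x ∈ Finset.range n } => ξ l ω) l = A l ω := by
            intro l hl
            funext jj
            rw [hAeq l ω]
            simp only [hAA]
            congr 1
            refine Finset.sum_congr rfl fun p hp => ?_
            rw [hexteq p (lt_of_lt_of_le (Finset.mem_range.mp hp) hl)]
          have hmemiff : (fun l : { x : ℕ // x ∈ Finset.range n } => ξ l ω) ∈ Sset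
              ↔ ω ∈ E n ∩ B n := by
            simp only [hSset, Set.mem_setOf_eq, Set.mem_inter_iff]
            constructor
            · rintro ⟨h1, h2⟩
              refine ⟨(hEmem n ω).mpr fun l hl => (hgoodiff l ω).mpr ?_, ?_⟩
              · obtain ⟨k', hk'⟩ := h1 l hl
                exact ⟨k', by rw [← hexteq l hl]; exact hk'⟩
              · rw [hB]
                intro l hl
                have := h2 l hl
                rwa [hAAeq l hl] at this
            · rintro ⟨h1, h2⟩
              constructor
              · intro l hl
                obtain ⟨k', hk'⟩ := (hgoodiff l ω).mp ((hEmem n ω).mp h1 l hl)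
                exact ⟨k', by rw [hexteq l hl]; exact hk'⟩
              · intro l hl
                rw [hAAeq l hl]
                rw [hB] at h2
                exact h2 l hl
          simp only [hF, hΦ]
          by_cases hEB : ω ∈ E n ∩ B n
          · rw [Set.indicator_of_mem hEB, Set.indicator_of_mem (hmemiff.mpr hEB)]
            simp only [hDZ, hzD]
            rw [hAAeq n le_rfl]
          · rw [Set.indicator_of_notMem hEB, Set.indicator_of_notMem (fun hc => hEB (hmemiff.mp hc))]
        have hGeq : ∀ k, G k = fun ω => Ψ k (fun l : { x : ℕ // x ∈ ({n} : Finset ℕ) } => ξ l ω) := by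
          intro k; funext ω
          simp only [hG, hΨ]
          by_cases h : ξ n ω = step m k
          · have hm1 : ω ∈ ξ n ⁻¹' {step m k} := h
            have hm2 : (fun l : { x : ℕ // x ∈ ({n} : Finset ℕ) } => ξ l ω) ∈
                ((fun v : { x : ℕ // x ∈ ({n} : Finset ℕ) } → Fin (m-1) → ℤ =>
                  v ⟨n, Finset.mem_singleton_self n⟩) ⁻¹' {step m k}) := h
            rw [Set.indicator_of_mem hm1, Set.indicator_of_mem hm2]
          · have hm1 : ω ∉ ξ n ⁻¹' {step m k} := h
            have hm2 : (fun l : { x : ℕ // x ∈ ({n} : Finset ℕ) } => ξ l ω) ∉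
                ((fun v : { x : ℕ // x ∈ ({n} : Finset ℕ) } → Fin (m-1) → ℤ =>
                  v ⟨n, Finset.mem_singleton_self n⟩) ⁻¹' {step m k}) := h
            rw [Set.indicator_of_notMem hm1, Set.indicator_of_notMem hm2]
        have hFm : ∀ k, Measurable (F k) := by
          intro k; rw [hFeq k]; exact (hΦm k).comp htupS
        have hGm : ∀ k, Measurable (G k) := fun k =>
          measurable_const.indicator ((hmeas n) (measurableSet_singleton _))
        have hindepFG : ∀ k, IndepFun (F k) (G k) μ := by
          intro k
          have h := base.comp (hΦm k) (hΨm k)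
          have e1 : (Φ k ∘ fun ω (l : { x : ℕ // x ∈ Finset.range n }) => ξ l ω) = F k := by
            funext ω; simp only [Function.comp_apply]; rw [hFeq k]
          have e2 : (Ψ k ∘ fun ω (l : { x : ℕ // x ∈ ({n} : Finset ℕ) }) => ξ l ω) = G k := by
            funext ω; simp only [Function.comp_apply]; rw [hGeq k]
          rwa [e1, e2] at h
        have hFbound : ∀ k ω, ‖F k ω‖ ≤ ((a i : ℝ) + n) + ((a j : ℝ) + n) + 1 := by
          intro k ω
          simp only [hF]
          by_cases hEB : ω ∈ E n ∩ B n
          · rw [Set.indicator_of_mem hEB]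
            have hgd : ∀ l < n, ω ∈ good l := (hEmem n ω).mp hEB.1
            have h1 := hbd n ω hgd i
            have h2 := hbd n ω hgd j
            have hsi := step_bound m k i
            have hsj := step_bound m k j
            have hsi' : |step m k i| ≤ 1 := abs_le.mpr ⟨hsi.1, hsi.2⟩
            have hsj' : |step m k j| ≤ 1 := abs_le.mpr ⟨hsj.1, hsj.2⟩
            rw [Real.norm_eq_abs, ← Int.cast_abs]
            have hz : |zD k ω| ≤ ((a i : ℤ) + n) + ((a j : ℤ) + n) + 1 := by
              simp only [hzD]
              calc |A n ω i * step m k j + A n ω j * step m k i + step m k i * step m k j|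
                  ≤ |A n ω i * step m k j + A n ω j * step m k i| + |step m k i * step m k j| :=
                    abs_add_le _ _
                _ ≤ |A n ω i * step m k j| + |A n ω j * step m k i| + |step m k i * step m k j| := by
                    have := abs_add_le (A n ω i * step m k j) (A n ω j * step m k i)
                    linarith
                _ ≤ ((a i : ℤ) + n) + ((a j : ℤ) + n) + 1 := by
                    rw [abs_mul, abs_mul, abs_mul]
                    have n1 := abs_nonneg (A n ω i)
                    have n2 := abs_nonneg (A n ω j)
                    have n3 := abs_nonneg (step m k i)
                    have n4 := abs_nonneg (step m k j)
                    nlinarith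
            calc ((|zD k ω| : ℤ) : ℝ) ≤ ((((a i : ℤ) + n) + ((a j : ℤ) + n) + 1 : ℤ) : ℝ) := by
                  exact_mod_cast hz
              _ = ((a i : ℝ) + n) + ((a j : ℝ) + n) + 1 := by push_cast; ring
          · rw [Set.indicator_of_notMem hEB]
            simp only [Int.cast_zero, norm_zero]
            positivity
        have hFint : ∀ k, Integrable (F k) μ := fun k =>
          (integrable_const _).mono' (hFm k).aestronglyMeasurable (ae_of_all _ (hFbound k))
        have hGint : ∀ k, Integrable (G k) μ := fun k => by
          simp only [hG]
          exact (integrable_const (1:ℝ)).indicator ((hmeas n) (measurableSet_singleton _))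
        have hGbound : ∀ k ω, ‖G k ω‖ ≤ 1 := by
          intro k ω
          simp only [hG]
          by_cases h : ω ∈ ξ n ⁻¹' {step m k}
          · rw [Set.indicator_of_mem h]; norm_num
          · rw [Set.indicator_of_notMem h]; norm_num
        have hGval : ∀ k, ∫ ω, G k ω ∂μ = 1 / (m : ℝ) := by
          intro k
          simp only [hG]
          rw [integral_indicator_const (1:ℝ) ((hmeas n) (measurableSet_singleton _)), smul_eq_mul,
            mul_one, measureReal_def]
          have hμ : μ (ξ n ⁻¹' {step m k}) = 1 / m := hunif n k
          rw [hμ, ENNReal.toReal_div]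
          simp
        have hprodint : ∀ k, Integrable (fun ω => F k ω * G k ω) μ := by
          intro k
          refine (integrable_const (((a i : ℝ) + n) + ((a j : ℝ) + n) + 1)).mono'
            ((hFm k).mul (hGm k)).aestronglyMeasurable (ae_of_all _ fun ω => ?_)
          rw [norm_mul]
          calc ‖F k ω‖ * ‖G k ω‖ ≤ (((a i : ℝ) + n) + ((a j : ℝ) + n) + 1) * 1 :=
                mul_le_mul (hFbound k ω) (hGbound k ω) (norm_nonneg _)
                  (by positivity)
            _ = ((a i : ℝ) + n) + ((a j : ℝ) + n) + 1 := by ring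
        have hsumF : ∀ ω, ∑ k : Fin m, F k ω = (E n ∩ B n).indicator (fun _ => (-1:ℝ)) ω := by
          intro ω
          simp only [hF]
          by_cases hEB : ω ∈ E n ∩ B n
          · simp only [Set.indicator_of_mem hEB]
            rw [← Int.cast_sum]
            have hzsum : ∑ k : Fin m, zD k ω = -1 := by
              simp only [hzD]
              rw [Finset.sum_add_distrib, Finset.sum_add_distrib, ← Finset.mul_sum, ← Finset.mul_sum,
                sum_step, sum_step, sum_step_mul m i j hij]
              ring
            rw [hzsum]
            norm_num
          · simp only [Set.indicator_of_notMem hEB, Int.cast_zero, Finset.sum_const_zero]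
        calc ∫ ω, f ω ∂μ = ∫ ω, ∑ k : Fin m, F k ω * G k ω ∂μ :=
              integral_congr_ae (ae_of_all _ hpoint)
          _ = ∑ k : Fin m, ∫ ω, F k ω * G k ω ∂μ :=
              integral_finset_sum _ fun k _ => hprodint k
          _ = ∑ k : Fin m, (∫ ω, F k ω ∂μ) * (1 / (m:ℝ)) := by
              refine Finset.sum_congr rfl fun k _ => ?_
              rw [show (fun ω => F k ω * G k ω) = F k * G k from rfl,
                ProbabilityTheory.IndepFun.integral_mul_eq_mul_integral (hindepFG k) (hFint k).aestronglyMeasurable (hGint k).aestronglyMeasurable, hGval k]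
          _ = (∑ k : Fin m, ∫ ω, F k ω ∂μ) * (1 / (m:ℝ)) := by rw [Finset.sum_mul]
          _ = (∫ ω, ∑ k : Fin m, F k ω ∂μ) * (1 / (m:ℝ)) := by
              rw [integral_finset_sum _ fun k _ => hFint k]
          _ = (-(μ (B n)).toReal) * (1 / (m:ℝ)) := by
              rw [integral_congr_ae (ae_of_all _ hsumF), integral_indicator_const (-1:ℝ) hENB,
                smul_eq_mul, measureReal_def,
                show μ (E n ∩ B n) = μ (B n) from by
                  rw [Set.inter_comm]
                  exact measure_inter_conull ((prob_compl_eq_zero_iff (hEmeas n)).mpr (hEfull n))]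
              ring
          _ = -(1 / m) * (μ (B n)).toReal := by ring
      rw [hdecomp, h2eq, hmain]; ring
    have hI0 : ∫ ω, (E 0).indicator (fun ω => (Y 0 ω : ℝ)) ω ∂μ = (a i : ℝ) * (a j : ℝ) := by
      have : ∀ ω, (E 0).indicator (fun ω => (Y 0 ω : ℝ)) ω = (a i : ℝ) * (a j : ℝ) := by
        intro ω
        rw [hE0, Set.indicator_univ, hY0, hX, hA0, hA0]
        push_cast; ring
      rw [integral_congr_ae (ae_of_all _ this), integral_const, measureReal_def, measure_univ]
      simp
    have hInn : ∀ n, 0 ≤ ∫ ω, (E n).indicator (fun ω => (Y n ω : ℝ)) ω ∂μ := by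
      intro n
      refine integral_nonneg fun ω => ?_
      show (0:ℝ) ≤ _
      by_cases hω : ω ∈ E n
      · rw [Set.indicator_of_mem hω]
        exact_mod_cast (hYX n ω ((hEmem n ω).mp hω)).1
      · rw [Set.indicator_of_notMem hω]
    have hval : ∀ n, ∫ ω, (E n).indicator (fun ω => (Y n ω : ℝ)) ω ∂μ
        = (a i : ℝ) * (a j : ℝ) - (1/m) * ∑ l ∈ Finset.range n, (μ (B l)).toReal := by
      intro n
      induction n with
      | zero => simp [hI0]
      | succ n ih => rw [hstep n, ih, Finset.sum_range_succ]; ring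
    have hpartial : ∀ n, ∑ l ∈ Finset.range n, (μ (B l)).toReal ≤ (m : ℝ) * ((a i : ℝ) * (a j : ℝ)) := by
      intro n
      have h := hInn n
      rw [hval n] at h
      have h2 : (1/m) * ∑ l ∈ Finset.range n, (μ (B l)).toReal ≤ (a i : ℝ) * (a j : ℝ) := by linarith
      calc ∑ l ∈ Finset.range n, (μ (B l)).toReal
          = m * ((1/m) * ∑ l ∈ Finset.range n, (μ (B l)).toReal) := by field_simp
        _ ≤ m * ((a i : ℝ) * (a j : ℝ)) := by
            exact mul_le_mul_of_nonneg_left h2 (le_of_lt hmR)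
    have htsum : ∑' n, μ (B n) ≤ (m : ℝ≥0∞) * ((a i : ℝ≥0∞) * (a j : ℝ≥0∞)) := by
      rw [ENNReal.tsum_eq_iSup_nat]
      refine iSup_le fun n => ?_
      have h1 : ∑ l ∈ Finset.range n, μ (B l)
          = ENNReal.ofReal (∑ l ∈ Finset.range n, (μ (B l)).toReal) := by
        rw [ENNReal.ofReal_sum_of_nonneg (fun l _ => ENNReal.toReal_nonneg)]
        exact Finset.sum_congr rfl fun l _ => (ENNReal.ofReal_toReal (measure_ne_top μ _)).symm
      rw [h1]
      calc ENNReal.ofReal (∑ l ∈ Finset.range n, (μ (B l)).toReal)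
          ≤ ENNReal.ofReal ((m : ℝ) * ((a i : ℝ) * (a j : ℝ))) :=
            ENNReal.ofReal_le_ofReal (hpartial n)
        _ = (m : ℝ≥0∞) * ((a i : ℝ≥0∞) * (a j : ℝ≥0∞)) := by
            rw [show ((m : ℝ) * ((a i : ℝ) * (a j : ℝ))) = ((m * (a i * a j) : ℕ) : ℝ) by push_cast; ring,
              ENNReal.ofReal_natCast]
            push_cast; ring
    have hTle : ∫⁻ ω, (T ω : ℝ≥0∞) ∂μ ≤ ∑' n, μ (B n) := by
      have hpoint : ∀ ω, (T ω : ℝ≥0∞) ≤ ∑' n, (B n).indicator (fun _ => (1:ℝ≥0∞)) ω := by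
        intro ω
        have hmem : ∀ n, n < T ω → ω ∈ B n := by
          intro n hn
          rw [hB]
          intro l hl hc
          rw [hT] at hn
          have := Nat.sInf_le (show l ∈ {n | (∏ jj, A n ω jj) = 0} from hc)
          omega
        calc (T ω : ℝ≥0∞) = ∑ n ∈ Finset.range (T ω), (B n).indicator (fun _ => (1:ℝ≥0∞)) ω := by
              rw [Finset.sum_congr rfl (fun n hn =>
                Set.indicator_of_mem (hmem n (Finset.mem_range.mp hn)) _)]
              simp
          _ ≤ ∑' n, (B n).indicator (fun _ => (1:ℝ≥0∞)) ω := ENNReal.sum_le_tsum _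
      calc ∫⁻ ω, (T ω : ℝ≥0∞) ∂μ
          ≤ ∫⁻ ω, ∑' n, (B n).indicator (fun _ => (1:ℝ≥0∞)) ω ∂μ := lintegral_mono hpoint
        _ = ∑' n, ∫⁻ ω, (B n).indicator (fun _ => (1:ℝ≥0∞)) ω ∂μ :=
            lintegral_tsum fun n => (measurable_one.indicator (hBmeas n)).aemeasurable
        _ = ∑' n, μ (B n) := by
            exact tsum_congr fun n => lintegral_indicator_one (hBmeas n)
    exact hTle.trans htsum

  calc ∫⁻ ω, (T ω : ℝ≥0∞) ∂μ
      ≤ ⨅ (i : Fin (m - 1)) (j : Fin (m - 1)) (_ : (j : ℕ) = (i : ℕ) + 1),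
          (m : ℝ≥0∞) * ((a i : ℝ≥0∞) * (a j : ℝ≥0∞)) :=
        le_iInf fun i => le_iInf fun j => le_iInf fun hij => key i j hij
    _ = (m : ℝ≥0∞) * ⨅ (i : Fin (m - 1)) (j : Fin (m - 1)) (_ : (j : ℕ) = (i : ℕ) + 1),
          ((a i : ℝ≥0∞) * (a j : ℝ≥0∞)) := by
        simp_rw [ENNReal.mul_iInf_of_ne hm0 hmtop]
end

section
/- For m = 4 with initial values (a_1,a_2,a_3) = (a,b,a), where a and b are positive integers, the expected value of T satisfies E[T] ≤ 4b(a − 1/2) = 2b(2a − 1). -/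
open MeasureTheory ProbabilityTheory
open scoped ENNReal

namespace Stmt3Aux


def S4 : Set (ℤ × ℤ × ℤ) := {(-1, 0, 0), (1, -1, 0), (0, 1, -1), (0, 0, 1)}

lemma measurable_S4 : MeasurableSet S4 := (Set.to_countable S4).measurableSet

noncomputable def g (p : ℤ × ℤ × ℤ) : ℝ≥0∞ := ((2 * p.2.1 * (p.1 + p.2.2 - 1)).toNat : ℝ≥0∞)

lemma measurable_g : Measurable g := measurable_of_countable g

lemma g_sum {A B C : ℤ} (hA : 1 ≤ A) (hB : 1 ≤ B) (hC : 1 ≤ C) :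
    g (A - 1, B, C) + g (A + 1, B - 1, C) + g (A, B + 1, C - 1) + g (A, B, C + 1) + 4
      = 4 * g (A, B, C) := by
  simp only [g]
  have h1 : (0:ℤ) ≤ 2 * B * (A - 1 + C - 1) := by nlinarith
  have h2 : (0:ℤ) ≤ 2 * (B - 1) * (A + 1 + C - 1) := by nlinarith
  have h3 : (0:ℤ) ≤ 2 * (B + 1) * (A + (C - 1) - 1) := by nlinarith
  have h4 : (0:ℤ) ≤ 2 * B * (A + (C + 1) - 1) := by nlinarith
  have h0 : (0:ℤ) ≤ 2 * B * (A + C - 1) := by nlinarith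
  have key : (2 * B * (A - 1 + C - 1)).toNat + (2 * (B - 1) * (A + 1 + C - 1)).toNat
      + (2 * (B + 1) * (A + (C - 1) - 1)).toNat + (2 * B * (A + (C + 1) - 1)).toNat + 4
      = 4 * (2 * B * (A + C - 1)).toNat := by
    have := Int.toNat_of_nonneg h1
    have := Int.toNat_of_nonneg h2
    have := Int.toNat_of_nonneg h3
    have := Int.toNat_of_nonneg h4
    have := Int.toNat_of_nonneg h0
    zify [Int.toNat_of_nonneg h1, Int.toNat_of_nonneg h2, Int.toNat_of_nonneg h3,
      Int.toNat_of_nonneg h4, Int.toNat_of_nonneg h0]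
    ring
  exact_mod_cast key

def pP (a b : ℕ) : ℕ → (ℕ → ℤ × ℤ × ℤ) → ℤ × ℤ × ℤ
  | 0, _ => ((a : ℤ), (b : ℤ), (a : ℤ))
  | n + 1, x => pP a b n x + x n

lemma measurable_pP (a b n : ℕ) : Measurable (pP a b n) := by
  induction n with
  | zero => exact measurable_const
  | succ n ih =>
    exact (measurable_of_countable (fun p : (ℤ×ℤ×ℤ) × (ℤ×ℤ×ℤ) => p.1 + p.2)).comp
      (ih.prodMk (measurable_pi_apply n))

lemma pP_congr (a b : ℕ) {x y : ℕ → ℤ × ℤ × ℤ} : ∀ n, (∀ j < n, x j = y j) →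
    pP a b n x = pP a b n y := by
  intro n
  induction n with
  | zero => intro _; rfl
  | succ n ih =>
    intro h
    simp only [pP, ih (fun j hj => h j (Nat.lt_succ_of_lt hj)), h n (Nat.lt_succ_self n)]

def ext (n : ℕ) (v : {k // k ∈ Finset.range n} → ℤ × ℤ × ℤ) : ℕ → ℤ × ℤ × ℤ :=
  fun k => if h : k ∈ Finset.range n then v ⟨k, h⟩ else 0

lemma measurable_ext (n : ℕ) : Measurable (ext n) := by
  apply measurable_pi_lambda
  intro k
  by_cases h : k ∈ Finset.range n
  · simpa [ext, h] using measurable_pi_apply (⟨k, h⟩ : {k // k ∈ Finset.range n})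
  · simpa [ext, h] using measurable_const


lemma ext_agree (n : ℕ) (x : ℕ → ℤ × ℤ × ℤ) {k : ℕ} (hk : k < n) :
    ext n (fun i : {k // k ∈ Finset.range n} => x i) k = x k := by
  simp [ext, Finset.mem_range, hk]

def pE (a b n : ℕ) : Set (ℕ → ℤ × ℤ × ℤ) :=
  {x | (∀ k ≤ n, (pP a b k x).1 * (pP a b k x).2.1 * (pP a b k x).2.2 ≠ 0) ∧ ∀ k < n, x k ∈ S4}

lemma measurable_pE (a b n : ℕ) : MeasurableSet (pE a b n) := by
  have h1 : MeasurableSet {x : ℕ → ℤ × ℤ × ℤ |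
      ∀ k ≤ n, (pP a b k x).1 * (pP a b k x).2.1 * (pP a b k x).2.2 ≠ 0} := by
    have : {x : ℕ → ℤ × ℤ × ℤ |
        ∀ k ≤ n, (pP a b k x).1 * (pP a b k x).2.1 * (pP a b k x).2.2 ≠ 0}
        = ⋂ k, ⋂ (_ : k ≤ n), ((fun x => (pP a b k x).1 * (pP a b k x).2.1 * (pP a b k x).2.2) ⁻¹' {0})ᶜ := by
      ext x; simp [Set.mem_iInter]
    rw [this]
    exact MeasurableSet.iInter fun k => MeasurableSet.iInter fun _ =>
      ((show Measurable fun x : ℕ → ℤ × ℤ × ℤ => (pP a b k x).1 * (pP a b k x).2.1 * (pP a b k x).2.2 from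
        (measurable_of_countable (fun p : ℤ × ℤ × ℤ => p.1 * p.2.1 * p.2.2)).comp (measurable_pP a b k))
        (measurableSet_singleton (0:ℤ))).compl
  have h2 : MeasurableSet {x : ℕ → ℤ × ℤ × ℤ | ∀ k < n, x k ∈ S4} := by
    have : {x : ℕ → ℤ × ℤ × ℤ | ∀ k < n, x k ∈ S4}
        = ⋂ k, ⋂ (_ : k < n), (fun x : ℕ → ℤ × ℤ × ℤ => x k) ⁻¹' S4 := by
      ext x; simp [Set.mem_iInter]
    rw [this]
    exact MeasurableSet.iInter fun k => MeasurableSet.iInter fun _ =>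
      (measurable_pi_apply k) measurable_S4
  exact h1.inter h2

lemma quarter {Ω : Type*} [MeasurableSpace Ω] (μ : Measure Ω)
    (ξ : ℕ → Ω → ℤ × ℤ × ℤ) (hmeas : ∀ n, Measurable (ξ n))
    (hindep : iIndepFun ξ μ) (n : ℕ)
    (φ : (ℕ → ℤ × ℤ × ℤ) → ℝ≥0∞) (hφ : Measurable φ)
    (hφdep : ∀ x y : ℕ → ℤ × ℤ × ℤ, (∀ k < n, x k = y k) → φ x = φ y)
    (w : ℤ × ℤ × ℤ) :
    ∫⁻ ω, φ (fun k => ξ k ω) * (ξ n ⁻¹' {w}).indicator 1 ω ∂μ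
      = (∫⁻ ω, φ (fun k => ξ k ω) ∂μ) * μ (ξ n ⁻¹' {w}) := by
  classical
  have hdisj : Disjoint (Finset.range n) ({n} : Finset ℕ) := by
    simp [Finset.disjoint_singleton_right]
  have hIndep := hindep.indepFun_finset (Finset.range n) {n} hdisj hmeas
  set F : Ω → ℝ≥0∞ := fun ω => φ (fun k => ξ k ω) with hF
  set H : Ω → ℝ≥0∞ := fun ω => (ξ n ⁻¹' {w}).indicator 1 ω with hH
  set φ' : ({k // k ∈ Finset.range n} → ℤ × ℤ × ℤ) → ℝ≥0∞ := fun t => φ (ext n t) with hφ'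
  set ψ : ({k // k ∈ ({n} : Finset ℕ)} → ℤ × ℤ × ℤ) → ℝ≥0∞ :=
    fun t => if t ⟨n, Finset.mem_singleton_self n⟩ = w then 1 else 0 with hψ
  have hφ'm : Measurable φ' := hφ.comp (measurable_ext n)
  have hψm : Measurable ψ := by
    have : ψ = (fun z : ℤ × ℤ × ℤ => if z = w then (1:ℝ≥0∞) else 0)
        ∘ (fun t : ({k // k ∈ ({n} : Finset ℕ)} → ℤ × ℤ × ℤ) => t ⟨n, Finset.mem_singleton_self n⟩) := rfl
    rw [this]
    exact (measurable_of_countable _).comp (measurable_pi_apply _)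
  have hFeq : F = φ' ∘ (fun ω (i : {k // k ∈ Finset.range n}) => ξ i ω) := by
    funext ω
    exact (hφdep _ _ (fun k hk => ext_agree n (fun j => ξ j ω) hk)).symm
  have hHeq : H = ψ ∘ (fun ω (i : {k // k ∈ ({n} : Finset ℕ)}) => ξ i ω) := by
    funext ω
    simp [hH, hψ, Set.indicator_apply, Function.comp]
  have hFH : IndepFun F H μ := by
    rw [hFeq, hHeq]
    exact hIndep.comp hφ'm hψm
  have hFm : Measurable F := hφ.comp (measurable_pi_lambda _ hmeas)
  have hHm : Measurable H := by
    rw [hHeq]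
    exact hψm.comp (measurable_pi_lambda _ (fun i => hmeas i))
  have := lintegral_mul_eq_lintegral_mul_lintegral_of_indepFun hFm hHm hFH
  have hHint : ∫⁻ ω, H ω ∂μ = μ (ξ n ⁻¹' {w}) := by
    rw [hH]
    exact lintegral_indicator_one ((hmeas n) (measurableSet_singleton w))
  calc ∫⁻ ω, F ω * H ω ∂μ = ∫⁻ ω, (F * H) ω ∂μ := rfl
    _ = (∫⁻ ω, F ω ∂μ) * ∫⁻ ω, H ω ∂μ := this
    _ = (∫⁻ ω, F ω ∂μ) * μ (ξ n ⁻¹' {w}) := by rw [hHint]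


end Stmt3Aux

open Stmt3Aux in
/-- For `m = 4` teams with initial gaps `(a, b, a)`, the expected value
of the first tie time `T` satisfies `E[T] ≤ 4b(a - 1/2) = 2b(2a - 1)`. -/
theorem stmt_3 (a b : ℕ) (ha : 0 < a) (hb : 0 < b)
{Ω : Type*} [MeasurableSpace Ω] (μ : Measure Ω) [IsProbabilityMeasure μ]
    (ξ : ℕ → Ω → ℤ × ℤ × ℤ)
    (hmeas : ∀ n, Measurable (ξ n))
    (hindep : iIndepFun ξ μ)
    (hunif : ∀ n, ∀ v ∈ ({(-1, 0, 0), (1, -1, 0), (0, 1, -1), (0, 0, 1)} : Set (ℤ × ℤ × ℤ)),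
      μ {ω | ξ n ω = v} = 1 / 4)
    (A B C : ℕ → Ω → ℤ)
    (hA : ∀ n ω, A (n + 1) ω = A n ω + (ξ n ω).1)
    (hB : ∀ n ω, B (n + 1) ω = B n ω + (ξ n ω).2.1)
    (hC : ∀ n ω, C (n + 1) ω = C n ω + (ξ n ω).2.2)
    (T : Ω → ℕ)
    (hT : ∀ ω, T ω = sInf {n | A n ω * B n ω * C n ω = 0})
    (hA0 : ∀ ω, A 0 ω = (a : ℤ)) (hB0 : ∀ ω, B 0 ω = (b : ℤ)) (hC0 : ∀ ω, C 0 ω = (a : ℤ)) :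
    ∫⁻ ω, (T ω : ℝ≥0∞) ∂μ ≤ ((2 * b * (2 * a - 1) : ℕ) : ℝ≥0∞) := by
  classical
  -- relation with path-space process
  have hP : ∀ n ω, (A n ω, B n ω, C n ω) = pP a b n (fun k => ξ k ω) := by
    intro n
    induction n with
    | zero => intro ω; simp [pP, hA0, hB0, hC0]
    | succ n ih =>
      intro ω
      have := ih ω
      simp [pP, ← this, hA, hB, hC, Prod.ext_iff]
  have hmA : ∀ n, Measurable (A n) := by
    intro n
    have : A n = fun ω => (pP a b n (fun k => ξ k ω)).1 :=
      funext fun ω => congrArg Prod.fst (hP n ω)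
    rw [this]
    exact measurable_fst.comp ((measurable_pP a b n).comp (measurable_pi_lambda _ hmeas))
  have hmB : ∀ n, Measurable (B n) := by
    intro n
    have : B n = fun ω => (pP a b n (fun k => ξ k ω)).2.1 :=
      funext fun ω => congrArg (fun p : ℤ × ℤ × ℤ => p.2.1) (hP n ω)
    rw [this]
    exact (measurable_fst.comp measurable_snd).comp
      ((measurable_pP a b n).comp (measurable_pi_lambda _ hmeas))
  have hmC : ∀ n, Measurable (C n) := by
    intro n
    have : C n = fun ω => (pP a b n (fun k => ξ k ω)).2.2 :=
      funext fun ω => congrArg (fun p : ℤ × ℤ × ℤ => p.2.2) (hP n ω)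
    rw [this]
    exact (measurable_snd.comp measurable_snd).comp
      ((measurable_pP a b n).comp (measurable_pi_lambda _ hmeas))
  -- the good events
  set EE : ℕ → Set Ω := fun n =>
    {ω | (∀ k ≤ n, A k ω * B k ω * C k ω ≠ 0) ∧ ∀ k < n, ξ k ω ∈ S4} with hEEdef
  have hEEpath : ∀ n ω, ω ∈ EE n ↔ (fun k => ξ k ω) ∈ pE a b n := by
    intro n ω
    constructor
    · rintro ⟨h1, h2⟩
      refine ⟨fun k hk => ?_, h2⟩
      rw [← hP k ω]; exact h1 k hk
    · rintro ⟨h1, h2⟩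
      refine ⟨fun k hk => ?_, h2⟩
      have := h1 k hk; rw [← hP k ω] at this; exact this
  have hmEE : ∀ n, MeasurableSet (EE n) := by
    intro n
    have : EE n = (fun ω => fun k => ξ k ω) ⁻¹' pE a b n := by
      ext ω; exact hEEpath n ω
    rw [this]
    exact (measurable_pi_lambda _ hmeas) (measurable_pE a b n)
  -- positivity on the good events
  have hpos : ∀ n, ∀ ω ∈ EE n, ∀ k, k ≤ n → 1 ≤ A k ω ∧ 1 ≤ B k ω ∧ 1 ≤ C k ω := by
    intro n ω hω k
    induction k with
    | zero =>
      intro _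
      rw [hA0, hB0, hC0]
      refine ⟨by exact_mod_cast ha, by exact_mod_cast hb, by exact_mod_cast ha⟩
    | succ k ih =>
      intro hk
      obtain ⟨h1, h2, h3⟩ := ih (Nat.le_of_succ_le hk)
      have hS : ξ k ω ∈ S4 := hω.2 k (Nat.lt_of_succ_le hk)
      have hprod := hω.1 (k + 1) hk
      have hne : A (k+1) ω ≠ 0 ∧ B (k+1) ω ≠ 0 ∧ C (k+1) ω ≠ 0 := by
        refine ⟨fun h => hprod ?_, fun h => hprod ?_, fun h => hprod ?_⟩ <;> simp [h]
      have hA' := hA k ω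
      have hB' := hB k ω
      have hC' := hC k ω
      simp only [S4, Set.mem_insert_iff, Set.mem_singleton_iff] at hS
      rcases hS with h | h | h | h <;>
        rw [h] at hA' hB' hC' <;> simp only [] at hA' hB' hC' <;> omega
  -- the supermartingale-type quantity
  set u : ℕ → ℝ≥0∞ := fun n => ∫⁻ ω in EE n, g (A n ω, B n ω, C n ω) ∂μ with hudef
  -- value at time 0
  have hEE0 : EE 0 = Set.univ := by
    ext ω
    simp only [hEEdef, Set.mem_setOf_eq, Set.mem_univ, iff_true, Nat.le_zero]
    constructor
    · rintro k rfl
      rw [hA0, hB0, hC0]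
      have h1 : (a : ℤ) ≠ 0 := by exact_mod_cast ha.ne'
      have h2 : (b : ℤ) ≠ 0 := by exact_mod_cast hb.ne'
      exact mul_ne_zero (mul_ne_zero h1 h2) h1
    · intro k hk; omega
  have hu0 : u 0 = ((2 * b * (2 * a - 1) : ℕ) : ℝ≥0∞) := by
    have hval : ∀ ω : Ω, g (A 0 ω, B 0 ω, C 0 ω) = ((2 * b * (2 * a - 1) : ℕ) : ℝ≥0∞) := by
      intro ω
      rw [hA0, hB0, hC0]
      simp only [g]
      congr 1
      have : 2 * (b : ℤ) * ((a : ℤ) + (a : ℤ) - 1) = ((2 * b * (2 * a - 1) : ℕ) : ℤ) := by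
        push_cast [Nat.cast_sub (by omega : 1 ≤ 2 * a)]
        ring
      rw [this, Int.toNat_natCast]
    rw [hudef]
    simp only [hval, hEE0, Measure.restrict_univ, lintegral_const, measure_univ, mul_one]
  have hS4ae : ∀ᵐ ω ∂μ, ∀ k, ξ k ω ∈ S4 := by
    rw [MeasureTheory.ae_all_iff]
    intro k
    have hmv : ∀ v : ℤ × ℤ × ℤ, MeasurableSet {ω | ξ k ω = v} := fun v =>
      (hmeas k) (measurableSet_singleton v)
    have hd : ∀ v w : ℤ × ℤ × ℤ, v ≠ w → Disjoint {ω | ξ k ω = v} {ω | ξ k ω = w} := by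
      intro v w hvw
      exact Set.disjoint_left.2 fun ω h1 h2 => hvw (h1 ▸ h2 ▸ rfl)
    have hsplit : {ω | ξ k ω ∈ S4} = {ω | ξ k ω = (-1,0,0)} ∪ ({ω | ξ k ω = (1,-1,0)}
        ∪ ({ω | ξ k ω = (0,1,-1)} ∪ {ω | ξ k ω = (0,0,1)})) := by
      ext ω; simp [S4]
    have h1 : μ {ω | ξ k ω ∈ S4} = 1 := by
      rw [hsplit, measure_union (by
          refine Set.disjoint_union_right.2 ⟨hd _ _ (by decide), Set.disjoint_union_right.2
            ⟨hd _ _ (by decide), hd _ _ (by decide)⟩⟩) ((hmv _).union ((hmv _).union (hmv _))),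
        measure_union (Set.disjoint_union_right.2 ⟨hd _ _ (by decide), hd _ _ (by decide)⟩)
          ((hmv _).union (hmv _)),
        measure_union (hd _ _ (by decide)) (hmv _),
        hunif k _ (by simp), hunif k _ (by simp), hunif k _ (by simp), hunif k _ (by simp)]
      rw [show ((1:ℝ≥0∞)/4 + (1/4 + (1/4 + 1/4))) = 4 * (1/4) by ring]
      rw [ENNReal.mul_div_cancel' (by norm_num) (by norm_num)]
    have hms : MeasurableSet {ω | ξ k ω ∈ S4} := (hmeas k) measurable_S4
    have : μ {ω | ξ k ω ∈ S4}ᶜ = 0 := by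
      rw [measure_compl hms (measure_ne_top μ _), h1, measure_univ, tsub_self]
    rw [MeasureTheory.ae_iff]
    rw [Set.compl_setOf] at this; exact this
  have hstep : ∀ n, u (n + 1) + μ (EE n) ≤ u n := by
    intro n
    have hmPn : Measurable (fun ω => (A n ω, B n ω, C n ω)) :=
      (hmA n).prodMk ((hmB n).prodMk (hmC n))
    set Fv : (ℤ × ℤ × ℤ) → Ω → ℝ≥0∞ := fun v =>
      (EE n).indicator (fun ω => g ((A n ω, B n ω, C n ω) + v)) with hFvdef
    have hmFv : ∀ v, Measurable (Fv v) := fun v =>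
      ((measurable_of_countable (fun p : ℤ × ℤ × ℤ => g (p + v))).comp hmPn).indicator (hmEE n)
    -- independence: each quarter
    have hquarter : ∀ v w : ℤ × ℤ × ℤ, w ∈ S4 →
        ∫⁻ ω, Fv v ω * (ξ n ⁻¹' {w}).indicator 1 ω ∂μ = (∫⁻ ω, Fv v ω ∂μ) * (1/4) := by
      intro v w hw
      set φ : (ℕ → ℤ × ℤ × ℤ) → ℝ≥0∞ :=
        fun x => (pE a b n).indicator (fun x => g (pP a b n x + v)) x with hφdef
      have hφm : Measurable φ :=
        ((measurable_of_countable (fun p : ℤ × ℤ × ℤ => g (p + v))).comp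
          (measurable_pP a b n)).indicator (measurable_pE a b n)
      have hφdep : ∀ x y : ℕ → ℤ × ℤ × ℤ, (∀ k < n, x k = y k) → φ x = φ y := by
        intro x y hxy
        have hPP : ∀ k ≤ n, pP a b k x = pP a b k y := fun k hk =>
          pP_congr a b k (fun j hj => hxy j (lt_of_lt_of_le hj hk))
        have hmemiff : x ∈ pE a b n ↔ y ∈ pE a b n := by
          constructor
          · rintro ⟨h1, h2⟩
            exact ⟨fun k hk => by rw [← hPP k hk]; exact h1 k hk,
                   fun k hk => by rw [← hxy k hk]; exact h2 k hk⟩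
          · rintro ⟨h1, h2⟩
            exact ⟨fun k hk => by rw [hPP k hk]; exact h1 k hk,
                   fun k hk => by rw [hxy k hk]; exact h2 k hk⟩
        by_cases hx : x ∈ pE a b n
        · rw [hφdef]
          simp only [Set.indicator_of_mem hx, Set.indicator_of_mem (hmemiff.1 hx)]
          rw [hPP n le_rfl]
        · rw [hφdef]
          simp only [Set.indicator_of_notMem hx,
            Set.indicator_of_notMem (fun h => hx (hmemiff.2 h))]
      have hFeq : Fv v = fun ω => φ (fun k => ξ k ω) := by
        funext ω
        by_cases hω : ω ∈ EE n
        · rw [hFvdef, hφdef]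
          simp only [Set.indicator_of_mem hω, Set.indicator_of_mem ((hEEpath n ω).1 hω)]
          rw [hP n ω]
        · rw [hFvdef, hφdef]
          simp only [Set.indicator_of_notMem hω,
            Set.indicator_of_notMem (fun h => hω ((hEEpath n ω).2 h))]
      have hμw : μ (ξ n ⁻¹' {w}) = 1/4 := by
        have : ξ n ⁻¹' {w} = {ω | ξ n ω = w} := by ext ω; simp
        rw [this]; exact hunif n w hw
      rw [hFeq]
      rw [quarter μ ξ hmeas hindep n φ hφm hφdep w, hμw]
    -- decomposition of the one-step evolution
    have hsub : EE (n + 1) ⊆ EE n := by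
      rintro ω ⟨h1, h2⟩
      exact ⟨fun k hk => h1 k (le_trans hk (Nat.le_succ n)),
             fun k hk => h2 k (Nat.lt_succ_of_lt hk)⟩
    have hdecomp : ∀ ω, ξ n ω ∈ S4 →
        (EE n).indicator (fun ω => g (A (n+1) ω, B (n+1) ω, C (n+1) ω)) ω
          = Fv (-1,0,0) ω * (ξ n ⁻¹' {((-1,0,0) : ℤ × ℤ × ℤ)}).indicator 1 ω
          + Fv (1,-1,0) ω * (ξ n ⁻¹' {((1,-1,0) : ℤ × ℤ × ℤ)}).indicator 1 ω
          + Fv (0,1,-1) ω * (ξ n ⁻¹' {((0,1,-1) : ℤ × ℤ × ℤ)}).indicator 1 ω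
          + Fv (0,0,1) ω * (ξ n ⁻¹' {((0,0,1) : ℤ × ℤ × ℤ)}).indicator 1 ω := by
      intro ω hS
      have harg : ∀ w : ℤ × ℤ × ℤ, ξ n ω = w →
          (A (n+1) ω, B (n+1) ω, C (n+1) ω) = (A n ω, B n ω, C n ω) + w := by
        intro w hw
        rw [hA, hB, hC, hw]
        rfl
      simp only [S4, Set.mem_insert_iff, Set.mem_singleton_iff] at hS
      rcases hS with h | h | h | h <;>
        by_cases hmem : ω ∈ EE n <;>
          simp [hFvdef, Set.indicator_apply, hmem, h, harg _ h]
    -- putting it together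
    have hkey : ∫⁻ ω in EE n, g (A (n+1) ω, B (n+1) ω, C (n+1) ω) ∂μ
        = ((∫⁻ ω, Fv (-1,0,0) ω ∂μ) + (∫⁻ ω, Fv (1,-1,0) ω ∂μ)
          + (∫⁻ ω, Fv (0,1,-1) ω ∂μ) + (∫⁻ ω, Fv (0,0,1) ω ∂μ)) * (1/4) := by
      rw [← lintegral_indicator (hmEE n)]
      have hae : (EE n).indicator (fun ω => g (A (n+1) ω, B (n+1) ω, C (n+1) ω))
          =ᵐ[μ] fun ω =>
            Fv (-1,0,0) ω * (ξ n ⁻¹' {((-1,0,0) : ℤ × ℤ × ℤ)}).indicator 1 ω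
          + Fv (1,-1,0) ω * (ξ n ⁻¹' {((1,-1,0) : ℤ × ℤ × ℤ)}).indicator 1 ω
          + Fv (0,1,-1) ω * (ξ n ⁻¹' {((0,1,-1) : ℤ × ℤ × ℤ)}).indicator 1 ω
          + Fv (0,0,1) ω * (ξ n ⁻¹' {((0,0,1) : ℤ × ℤ × ℤ)}).indicator 1 ω := by
        filter_upwards [hS4ae] with ω hω
        exact hdecomp ω (hω n)
      rw [lintegral_congr_ae hae]
      have hmind : ∀ w : ℤ × ℤ × ℤ, Measurable ((ξ n ⁻¹' {w}).indicator (1 : Ω → ℝ≥0∞)) :=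
        fun w => measurable_one.indicator ((hmeas n) (measurableSet_singleton w))
      rw [lintegral_add_right _ ((hmFv _).fun_mul (hmind _)),
          lintegral_add_right _ ((hmFv _).fun_mul (hmind _)),
          lintegral_add_right _ ((hmFv _).fun_mul (hmind _))]
      rw [hquarter _ _ (by simp [S4]), hquarter _ _ (by simp [S4]),
          hquarter _ _ (by simp [S4]), hquarter _ _ (by simp [S4])]
      ring
    have hFvint : ∀ v, ∫⁻ ω, Fv v ω ∂μ = ∫⁻ ω in EE n, g ((A n ω, B n ω, C n ω) + v) ∂μ :=
      fun v => lintegral_indicator (hmEE n) _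
    have hsum4 : (∫⁻ ω, Fv (-1,0,0) ω ∂μ) + (∫⁻ ω, Fv (1,-1,0) ω ∂μ)
          + (∫⁻ ω, Fv (0,1,-1) ω ∂μ) + (∫⁻ ω, Fv (0,0,1) ω ∂μ) + 4 * μ (EE n) = 4 * u n := by
      rw [hFvint, hFvint, hFvint, hFvint]
      have hmg : ∀ v : ℤ × ℤ × ℤ, Measurable (fun ω => g ((A n ω, B n ω, C n ω) + v)) :=
        fun v => (measurable_of_countable (fun p : ℤ × ℤ × ℤ => g (p + v))).comp hmPn
      have h4 : (4 : ℝ≥0∞) * μ (EE n) = ∫⁻ _ in EE n, (4:ℝ≥0∞) ∂μ := by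
        rw [setLIntegral_const]
      rw [h4, ← lintegral_add_left (hmg _), ← lintegral_add_left ((hmg _).fun_add (hmg _)),
          ← lintegral_add_left (((hmg _).fun_add (hmg _)).fun_add (hmg _)),
          ← lintegral_add_left ((((hmg _).fun_add (hmg _)).fun_add (hmg _)).fun_add (hmg _))]
      have hpt : ∀ ω ∈ EE n,
          g ((A n ω, B n ω, C n ω) + (-1,0,0)) + g ((A n ω, B n ω, C n ω) + (1,-1,0))
          + g ((A n ω, B n ω, C n ω) + (0,1,-1)) + g ((A n ω, B n ω, C n ω) + (0,0,1)) + 4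
          = 4 * g (A n ω, B n ω, C n ω) := by
        intro ω hω
        obtain ⟨h1, h2, h3⟩ := hpos n ω hω n le_rfl
        have e1 : (A n ω, B n ω, C n ω) + ((-1,0,0) : ℤ × ℤ × ℤ)
            = (A n ω - 1, B n ω, C n ω) := by
          rw [Prod.mk_add_mk, Prod.mk_add_mk]
          simp [sub_eq_add_neg]
        have e2 : (A n ω, B n ω, C n ω) + ((1,-1,0) : ℤ × ℤ × ℤ)
            = (A n ω + 1, B n ω - 1, C n ω) := by
          rw [Prod.mk_add_mk, Prod.mk_add_mk]
          simp [sub_eq_add_neg]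
        have e3 : (A n ω, B n ω, C n ω) + ((0,1,-1) : ℤ × ℤ × ℤ)
            = (A n ω, B n ω + 1, C n ω - 1) := by
          rw [Prod.mk_add_mk, Prod.mk_add_mk]
          simp [sub_eq_add_neg]
        have e4 : (A n ω, B n ω, C n ω) + ((0,0,1) : ℤ × ℤ × ℤ)
            = (A n ω, B n ω, C n ω + 1) := by
          rw [Prod.mk_add_mk, Prod.mk_add_mk]
          simp
        rw [e1, e2, e3, e4]
        exact g_sum h1 h2 h3
      exact Eq.trans (setLIntegral_congr_fun (hmEE n) hpt)
        (lintegral_const_mul 4 ((measurable_of_countable g).comp hmPn))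
    -- conclude
    have h14 : ((1:ℝ≥0∞)/4) * 4 = 1 := ENNReal.div_mul_cancel (by norm_num) (by norm_num)
    have hmono : u (n+1) ≤ ∫⁻ ω in EE n, g (A (n+1) ω, B (n+1) ω, C (n+1) ω) ∂μ :=
      lintegral_mono_set hsub
    have hmain : 4 * u (n+1) + 4 * μ (EE n) ≤ 4 * u n := by
      calc 4 * u (n+1) + 4 * μ (EE n)
          ≤ 4 * (∫⁻ ω in EE n, g (A (n+1) ω, B (n+1) ω, C (n+1) ω) ∂μ) + 4 * μ (EE n) :=
            add_le_add_left (mul_le_mul_right hmono 4) _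
        _ = ((∫⁻ ω, Fv (-1,0,0) ω ∂μ) + (∫⁻ ω, Fv (1,-1,0) ω ∂μ)
            + (∫⁻ ω, Fv (0,1,-1) ω ∂μ) + (∫⁻ ω, Fv (0,0,1) ω ∂μ)) + 4 * μ (EE n) := by
            rw [hkey, mul_comm (4:ℝ≥0∞), mul_assoc, h14, mul_one]
        _ = 4 * u n := hsum4
    have : 4 * (u (n+1) + μ (EE n)) ≤ 4 * u n := by rw [mul_add]; exact hmain
    exact (ENNReal.mul_le_mul_iff_right (by norm_num) (by norm_num)).1 this

  -- telescoping
  have htel : ∀ n, (∑ k ∈ Finset.range n, μ (EE k)) + u n ≤ u 0 := by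
    intro n
    induction n with
    | zero => simp
    | succ n ih =>
      calc (∑ k ∈ Finset.range (n+1), μ (EE k)) + u (n+1)
          = (∑ k ∈ Finset.range n, μ (EE k)) + (u (n+1) + μ (EE n)) := by
            rw [Finset.sum_range_succ]; ring
        _ ≤ (∑ k ∈ Finset.range n, μ (EE k)) + u n := by
            exact add_le_add_right (hstep n) _
        _ ≤ u 0 := ih
  have hpart : ∀ n, (∑ k ∈ Finset.range n, μ (EE k)) ≤ u 0 := fun n =>
    le_trans le_self_add (htel n)
  have htsum : (∑' n, μ (EE n)) ≤ u 0 := by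
    rw [ENNReal.tsum_eq_iSup_sum]
    refine iSup_le fun s => ?_
    refine le_trans (Finset.sum_le_sum_of_subset fun k hk => ?_) (hpart (s.sup id + 1))
    exact Finset.mem_range.2 (Nat.lt_succ_of_le (Finset.le_sup (f := id) hk))
  -- almost-everywhere bound of T by the indicators
  have hTbound : ∀ᵐ ω ∂μ, (T ω : ℝ≥0∞) ≤ ∑' n, (EE n).indicator 1 ω := by
    filter_upwards [hS4ae] with ω hω
    have hmem : ∀ n, n < T ω → ω ∈ EE n := by
      intro n hn
      refine ⟨fun k hk h0 => ?_, fun k _ => hω k⟩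
      have : T ω ≤ k := by
        rw [hT ω]
        exact Nat.sInf_le h0
      omega
    calc (T ω : ℝ≥0∞) = ∑ k ∈ Finset.range (T ω), (EE k).indicator 1 ω := by
          rw [Finset.sum_congr rfl fun k hk =>
            Set.indicator_of_mem (hmem k (Finset.mem_range.1 hk)) 1]
          simp
      _ ≤ ∑' n, (EE n).indicator 1 ω := ENNReal.sum_le_tsum _
  calc ∫⁻ ω, (T ω : ℝ≥0∞) ∂μ ≤ ∫⁻ ω, ∑' n, (EE n).indicator 1 ω ∂μ :=
        lintegral_mono_ae hTbound
    _ = ∑' n, ∫⁻ ω, (EE n).indicator 1 ω ∂μ :=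
        lintegral_tsum fun n => (measurable_one.indicator (hmEE n)).aemeasurable
    _ = ∑' n, μ (EE n) := by
        refine tsum_congr fun n => ?_
        exact lintegral_indicator_one (hmEE n)
    _ ≤ u 0 := htsum
    _ = _ := hu0
end

section
/- The process G(n) = A(n)·B(n) + n/3 is a martingale with respect to the filtration (F_n), i.e. E[G(n+1) | F_n] = G(n) for every n ≥ 0. -/
open MeasureTheory ProbabilityTheory Filter
open scoped ENNReal

lemma aux_ae_three {Ω : Type*} [MeasurableSpace Ω] (μ : Measure Ω) [IsProbabilityMeasure μ]
    (g : Ω → ℤ × ℤ) (hg : Measurable g)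
    (hunif : ∀ v ∈ ({(-1, 0), (1, -1), (0, 1)} : Set (ℤ × ℤ)), μ {ω | g ω = v} = 1 / 3) :
    ∀ᵐ ω ∂μ, g ω = (-1, 0) ∨ g ω = (1, -1) ∨ g ω = (0, 1) := by
  have hE : ∀ v : ℤ × ℤ, MeasurableSet {ω | g ω = v} := fun v =>
    hg (measurableSet_singleton v)
  have h1 : μ {ω | g ω = (-1, 0)} = 1 / 3 := hunif _ (by simp)
  have h2 : μ {ω | g ω = (1, -1)} = 1 / 3 := hunif _ (by simp)
  have h3 : μ {ω | g ω = (0, 1)} = 1 / 3 := hunif _ (by simp)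
  have hd12 : Disjoint {ω | g ω = (-1, 0)} {ω | g ω = (1, -1)} := by
    rw [Set.disjoint_left]; rintro ω h1 h2; simp_all
  have hd13 : Disjoint ({ω | g ω = (-1, 0)} ∪ {ω | g ω = (1, -1)}) {ω | g ω = (0, 1)} := by
    rw [Set.disjoint_left]; rintro ω h1 h2
    rcases h1 with h1 | h1 <;> simp_all
  have hu : μ ({ω | g ω = (-1, 0)} ∪ {ω | g ω = (1, -1)} ∪ {ω | g ω = (0, 1)}) = 1 := by
    rw [measure_union hd13 (hE _), measure_union hd12 (hE _), h1, h2, h3]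
    rw [ENNReal.div_add_div_same, ENNReal.div_add_div_same]
    have h31 : (1 : ℝ≥0∞) + 1 + 1 = 3 := by norm_num
    rw [h31]
    exact ENNReal.div_self (by norm_num) (by norm_num)
  have hc : μ ({ω | g ω = (-1, 0)} ∪ {ω | g ω = (1, -1)} ∪ {ω | g ω = (0, 1)})ᶜ = 0 := by
    rw [measure_compl (((hE _).union (hE _)).union (hE _)) (measure_ne_top _ _), hu,
      measure_univ, tsub_self]
  refine (ae_iff.2 ?_)
  convert hc using 2
  ext ω; simp [Set.mem_union]; tauto

lemma aux_integral_three {Ω : Type*} [MeasurableSpace Ω] (μ : Measure Ω) [IsProbabilityMeasure μ]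
    (g : Ω → ℤ × ℤ) (hg : Measurable g)
    (hunif : ∀ v ∈ ({(-1, 0), (1, -1), (0, 1)} : Set (ℤ × ℤ)), μ {ω | g ω = v} = 1 / 3)
    (f : ℤ × ℤ → ℝ) :
    ∫ ω, f (g ω) ∂μ = (f (-1, 0) + f (1, -1) + f (0, 1)) / 3 := by
  have hE : ∀ v : ℤ × ℤ, MeasurableSet {ω | g ω = v} := fun v =>
    hg (measurableSet_singleton v)
  have hi : ∀ (v : ℤ × ℤ) (c : ℝ), Integrable ((fun ω => ({ω | g ω = v}).indicator
      (fun _ => c) ω)) μ := fun v c => (integrable_const c).indicator (hE v)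
  have hval : ∀ (v : ℤ × ℤ), v ∈ ({(-1, 0), (1, -1), (0, 1)} : Set (ℤ × ℤ)) → ∀ c : ℝ,
      ∫ ω, ({ω | g ω = v}).indicator (fun _ => c) ω ∂μ = c / 3 := by
    intro v hv c
    rw [integral_indicator_const _ (hE v), measureReal_def, hunif v hv, smul_eq_mul, ENNReal.toReal_div]
    norm_num
    ring
  have hae : (fun ω => f (g ω)) =ᵐ[μ] (fun ω =>
      ({ω | g ω = ((-1, 0) : ℤ × ℤ)}).indicator (fun _ => f (-1, 0)) ω
      + ({ω | g ω = ((1, -1) : ℤ × ℤ)}).indicator (fun _ => f (1, -1)) ω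
      + ({ω | g ω = ((0, 1) : ℤ × ℤ)}).indicator (fun _ => f (0, 1)) ω) := by
    filter_upwards [aux_ae_three μ g hg hunif] with ω hω
    rcases hω with h' | h' | h' <;>
      · simp only [Set.indicator_apply, Set.mem_setOf_eq, h']
        norm_num
  rw [integral_congr_ae hae]
  have e1 : ∫ ω, (({ω | g ω = ((-1, 0) : ℤ × ℤ)}).indicator (fun _ => f (-1, 0)) ω
      + ({ω | g ω = ((1, -1) : ℤ × ℤ)}).indicator (fun _ => f (1, -1)) ω)
      + ({ω | g ω = ((0, 1) : ℤ × ℤ)}).indicator (fun _ => f (0, 1)) ω ∂μ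
      = (∫ ω, (({ω | g ω = ((-1, 0) : ℤ × ℤ)}).indicator (fun _ => f (-1, 0)) ω
      + ({ω | g ω = ((1, -1) : ℤ × ℤ)}).indicator (fun _ => f (1, -1)) ω) ∂μ)
      + ∫ ω, ({ω | g ω = ((0, 1) : ℤ × ℤ)}).indicator (fun _ => f (0, 1)) ω ∂μ :=
    integral_add ((hi _ _).add (hi _ _)) (hi _ _)
  have e2 : ∫ ω, (({ω | g ω = ((-1, 0) : ℤ × ℤ)}).indicator (fun _ => f (-1, 0)) ω
      + ({ω | g ω = ((1, -1) : ℤ × ℤ)}).indicator (fun _ => f (1, -1)) ω) ∂μ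
      = (∫ ω, ({ω | g ω = ((-1, 0) : ℤ × ℤ)}).indicator (fun _ => f (-1, 0)) ω ∂μ)
      + ∫ ω, ({ω | g ω = ((1, -1) : ℤ × ℤ)}).indicator (fun _ => f (1, -1)) ω ∂μ :=
    integral_add (hi _ _) (hi _ _)
  rw [e1, e2, hval _ (by simp) _, hval _ (by simp) _, hval _ (by simp) _]
  ring


/-- The process `G n = A n * B n + n / 3` is a martingale with respect
to the filtration generated by the steps: `E[G (n+1) | ℱ n] = G n` a.s. for every `n`. -/
theorem stmt_5
{Ω : Type*} [MeasurableSpace Ω] (μ : Measure Ω) [IsProbabilityMeasure μ]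
    (a b : ℕ) (ha : 0 < a) (hb : 0 < b)
    (ξ : ℕ → Ω → ℤ × ℤ)
    (hmeas : ∀ n, Measurable (ξ n))
    (hindep : iIndepFun ξ μ)
    (hunif : ∀ n, ∀ v ∈ ({(-1, 0), (1, -1), (0, 1)} : Set (ℤ × ℤ)),
      μ {ω | ξ n ω = v} = 1 / 3)
    (A B : ℕ → Ω → ℤ)
    (hA0 : ∀ ω, A 0 ω = (a : ℤ)) (hB0 : ∀ ω, B 0 ω = (b : ℤ))
    (hA : ∀ n ω, A (n + 1) ω = A n ω + (ξ n ω).1)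
    (hB : ∀ n ω, B (n + 1) ω = B n ω + (ξ n ω).2)
(ℱ : ℕ → MeasurableSpace Ω)
    (hℱ : ∀ n, ℱ n = ⨆ k ∈ Finset.range n, MeasurableSpace.comap (ξ k) inferInstance)
    (G : ℕ → Ω → ℝ)
    (hG : ∀ n ω, G n ω = ((A n ω * B n ω : ℤ) : ℝ) + (n : ℝ) / 3) :
    ∀ n : ℕ, μ[G (n + 1)|ℱ n] =ᵐ[μ] G n := by
  -- basic σ-algebra facts
  have hle : ∀ m, ℱ m ≤ ‹MeasurableSpace Ω› := by
    intro m; rw [hℱ]; exact iSup₂_le fun k _ => (hmeas k).comap_le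
  have hcle : ∀ k m, k < m → MeasurableSpace.comap (ξ k) inferInstance ≤ ℱ m := by
    intro k m hk; rw [hℱ]
    exact le_iSup₂ (f := fun k _ => MeasurableSpace.comap (ξ k) inferInstance) k
      (Finset.mem_range.mpr hk)
  have hmono : ∀ {k m : ℕ}, k ≤ m → ℱ k ≤ ℱ m := by
    intro k m h; rw [hℱ, hℱ]
    exact iSup₂_le fun i hi => le_iSup₂ (f := fun k _ => MeasurableSpace.comap (ξ k) inferInstance)
      i (Finset.mem_range.mpr (lt_of_lt_of_le (Finset.mem_range.mp hi) h))
  have hξm : ∀ k, Measurable[MeasurableSpace.comap (ξ k) inferInstance] (ξ k) :=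
    fun k => measurable_iff_comap_le.mpr le_rfl
  -- measurability of A, B wrt the filtration
  have hAm : ∀ m, Measurable[ℱ m] (A m) := by
    intro m; induction m with
    | zero =>
      have h : A 0 = fun _ => (a : ℤ) := funext hA0
      rw [h]; exact measurable_const
    | succ m ih =>
      have h : A (m + 1) = fun ω => A m ω + (ξ m ω).1 := funext (hA m)
      rw [h]
      exact (ih.mono (hmono m.le_succ) le_rfl).add
        ((measurable_fst.comp (hξm m)).mono (hcle m (m + 1) m.lt_succ_self) le_rfl)
  have hBm : ∀ m, Measurable[ℱ m] (B m) := by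
    intro m; induction m with
    | zero =>
      have h : B 0 = fun _ => (b : ℤ) := funext hB0
      rw [h]; exact measurable_const
    | succ m ih =>
      have h : B (m + 1) = fun ω => B m ω + (ξ m ω).2 := funext (hB m)
      rw [h]
      exact (ih.mono (hmono m.le_succ) le_rfl).add
        ((measurable_snd.comp (hξm m)).mono (hcle m (m + 1) m.lt_succ_self) le_rfl)
  have hGm : ∀ m, StronglyMeasurable[ℱ m] (G m) := by
    intro m
    have h : G m = fun ω => ((A m ω * B m ω : ℤ) : ℝ) + (m : ℝ) / 3 := funext (hG m)
    rw [h]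
    exact (((measurable_of_countable (fun p : ℤ × ℤ => ((p.1 * p.2 : ℤ) : ℝ))).comp
      ((hAm m).prodMk (hBm m))).add measurable_const).stronglyMeasurable
  -- independence of ξ n from ℱ n
  intro n
  have hIndep : Indep (MeasurableSpace.comap (ξ n) inferInstance) (ℱ n) μ := by
    have h := ProbabilityTheory.indep_iSup_of_disjoint
      (m := fun k => MeasurableSpace.comap (ξ k) inferInstance)
      (fun k => (hmeas k).comap_le) hindep (S := {n}) (T := {k | k < n})
      (by simp [Set.disjoint_left])
    have e1 : (⨆ i ∈ ({n} : Set ℕ), MeasurableSpace.comap (ξ i) inferInstance)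
        = MeasurableSpace.comap (ξ n) inferInstance := by simp
    have e2 : (⨆ i ∈ {k | k < n}, MeasurableSpace.comap (ξ i) inferInstance) = ℱ n := by
      rw [hℱ]
      simp [Finset.mem_range, Set.mem_setOf_eq]
    rw [e1, e2] at h
    exact h
  -- a.e. bounds
  have haeXY : ∀ᵐ ω ∂μ, |((ξ n ω).1 : ℝ)| ≤ 1 ∧ |((ξ n ω).2 : ℝ)| ≤ 1 := by
    filter_upwards [aux_ae_three μ (ξ n) (hmeas n) (hunif n)] with ω hω
    rcases hω with h | h | h <;> rw [h] <;> norm_num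
  have hAb : ∀ m, ∀ᵐ ω ∂μ, |(A m ω : ℝ)| ≤ (a : ℝ) + m := by
    intro m; induction m with
    | zero =>
      filter_upwards with ω
      rw [hA0 ω]; push_cast; rw [abs_of_nonneg (Nat.cast_nonneg a)]; linarith
    | succ m ih =>
      filter_upwards [ih, aux_ae_three μ (ξ m) (hmeas m) (hunif m)] with ω h1 h2
      rw [hA m ω]
      have hb1 : |((ξ m ω).1 : ℝ)| ≤ 1 := by rcases h2 with h | h | h <;> rw [h] <;> norm_num
      have habs := abs_add_le ((A m ω : ℝ)) (((ξ m ω).1 : ℝ))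
      push_cast
      push_cast at habs
      linarith
  have hBb : ∀ m, ∀ᵐ ω ∂μ, |(B m ω : ℝ)| ≤ (b : ℝ) + m := by
    intro m; induction m with
    | zero =>
      filter_upwards with ω
      rw [hB0 ω]; push_cast; rw [abs_of_nonneg (Nat.cast_nonneg b)]; linarith
    | succ m ih =>
      filter_upwards [ih, aux_ae_three μ (ξ m) (hmeas m) (hunif m)] with ω h1 h2
      rw [hB m ω]
      have hb1 : |((ξ m ω).2 : ℝ)| ≤ 1 := by rcases h2 with h | h | h <;> rw [h] <;> norm_num
      have habs := abs_add_le ((B m ω : ℝ)) (((ξ m ω).2 : ℝ))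
      push_cast
      push_cast at habs
      linarith
  -- integrability helper
  have hint : ∀ (f : Ω → ℝ) (C : ℝ), Measurable f → (∀ᵐ ω ∂μ, |f ω| ≤ C) → Integrable f μ := by
    intro f C hf hbd
    refine (integrable_const C).mono' hf.aestronglyMeasurable ?_
    filter_upwards [hbd] with ω h
    simpa [Real.norm_eq_abs] using h
  -- global measurability
  have hAM : Measurable fun ω => (A n ω : ℝ) :=
    (measurable_of_countable _).comp ((hAm n).mono (hle n) le_rfl)
  have hBM : Measurable fun ω => (B n ω : ℝ) :=
    (measurable_of_countable _).comp ((hBm n).mono (hle n) le_rfl)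
  have hXM : Measurable fun ω => ((ξ n ω).1 : ℝ) :=
    (measurable_of_countable (fun p : ℤ × ℤ => (p.1 : ℝ))).comp (hmeas n)
  have hYM : Measurable fun ω => ((ξ n ω).2 : ℝ) :=
    (measurable_of_countable (fun p : ℤ × ℤ => (p.2 : ℝ))).comp (hmeas n)
  -- integrable pieces
  have intGn : Integrable (G n) μ := by
    refine hint _ (((a : ℝ) + n) * ((b : ℝ) + n) + n) ?_ ?_
    · have h : G n = fun ω => ((A n ω * B n ω : ℤ) : ℝ) + (n : ℝ) / 3 := funext (hG n)
      rw [h]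
      exact ((measurable_of_countable (fun p : ℤ × ℤ => ((p.1 * p.2 : ℤ) : ℝ))).comp
        (((hAm n).mono (hle n) le_rfl).prodMk ((hBm n).mono (hle n) le_rfl))).add
        measurable_const
    · filter_upwards [hAb n, hBb n] with ω h1 h2
      rw [hG n ω]
      push_cast
      have hm : |(A n ω : ℝ) * (B n ω : ℝ)| ≤ ((a : ℝ) + n) * ((b : ℝ) + n) := by
        rw [abs_mul]
        exact mul_le_mul h1 h2 (abs_nonneg _) (by positivity)
      have habs := abs_add_le ((A n ω : ℝ) * (B n ω : ℝ)) ((n : ℝ) / 3)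
      have hn0 : (0 : ℝ) ≤ (n : ℝ) := Nat.cast_nonneg n
      rw [abs_of_nonneg (by positivity : (0:ℝ) ≤ (n : ℝ) / 3)] at habs
      linarith
  have intY : Integrable (fun ω => ((ξ n ω).2 : ℝ)) μ := by
    refine hint _ 1 hYM ?_
    filter_upwards [haeXY] with ω h; exact h.2
  have intX : Integrable (fun ω => ((ξ n ω).1 : ℝ)) μ := by
    refine hint _ 1 hXM ?_
    filter_upwards [haeXY] with ω h; exact h.1
  have intAY : Integrable (fun ω => (A n ω : ℝ) * ((ξ n ω).2 : ℝ)) μ := by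
    refine hint _ ((a : ℝ) + n) (hAM.mul hYM) ?_
    filter_upwards [hAb n, haeXY] with ω h1 h2
    rw [abs_mul]
    calc |(A n ω : ℝ)| * |((ξ n ω).2 : ℝ)| ≤ ((a : ℝ) + n) * 1 :=
          mul_le_mul h1 h2.2 (abs_nonneg _) (by positivity)
      _ = (a : ℝ) + n := mul_one _
  have intBX : Integrable (fun ω => (B n ω : ℝ) * ((ξ n ω).1 : ℝ)) μ := by
    refine hint _ ((b : ℝ) + n) (hBM.mul hXM) ?_
    filter_upwards [hBb n, haeXY] with ω h1 h2
    rw [abs_mul]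
    calc |(B n ω : ℝ)| * |((ξ n ω).1 : ℝ)| ≤ ((b : ℝ) + n) * 1 :=
          mul_le_mul h1 h2.1 (abs_nonneg _) (by positivity)
      _ = (b : ℝ) + n := mul_one _
  have intXY : Integrable (fun ω => ((ξ n ω).1 : ℝ) * ((ξ n ω).2 : ℝ)) μ := by
    refine hint _ 1 (hXM.mul hYM) ?_
    filter_upwards [haeXY] with ω h
    rw [abs_mul]
    calc |((ξ n ω).1 : ℝ)| * |((ξ n ω).2 : ℝ)| ≤ 1 * 1 :=
          mul_le_mul h.1 h.2 (abs_nonneg _) (by positivity)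
      _ = 1 := mul_one _
  -- integral values
  have iX : ∫ ω, ((ξ n ω).1 : ℝ) ∂μ = 0 := by
    have h := aux_integral_three μ (ξ n) (hmeas n) (hunif n) (fun p => (p.1 : ℝ))
    simpa using h
  have iY : ∫ ω, ((ξ n ω).2 : ℝ) ∂μ = 0 := by
    have h := aux_integral_three μ (ξ n) (hmeas n) (hunif n) (fun p => (p.2 : ℝ))
    simpa using h
  have iXY : ∫ ω, ((ξ n ω).1 : ℝ) * ((ξ n ω).2 : ℝ) ∂μ = -(1 / 3) := by
    have h := aux_integral_three μ (ξ n) (hmeas n) (hunif n) (fun p => (p.1 : ℝ) * (p.2 : ℝ))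
    simp at h
    rw [h]; norm_num
  -- strongly measurable pieces
  have hAsm : StronglyMeasurable[ℱ n] (fun ω => (A n ω : ℝ)) :=
    ((measurable_of_countable (fun z : ℤ => (z : ℝ))).comp (hAm n)).stronglyMeasurable
  have hBsm : StronglyMeasurable[ℱ n] (fun ω => (B n ω : ℝ)) :=
    ((measurable_of_countable (fun z : ℤ => (z : ℝ))).comp (hBm n)).stronglyMeasurable
  have hXsm' : StronglyMeasurable[MeasurableSpace.comap (ξ n) inferInstance]
      (fun ω => ((ξ n ω).1 : ℝ)) :=
    ((measurable_of_countable (fun p : ℤ × ℤ => (p.1 : ℝ))).comp (hξm n)).stronglyMeasurable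
  have hYsm' : StronglyMeasurable[MeasurableSpace.comap (ξ n) inferInstance]
      (fun ω => ((ξ n ω).2 : ℝ)) :=
    ((measurable_of_countable (fun p : ℤ × ℤ => (p.2 : ℝ))).comp (hξm n)).stronglyMeasurable
  have hXYsm' : StronglyMeasurable[MeasurableSpace.comap (ξ n) inferInstance]
      (fun ω => ((ξ n ω).1 : ℝ) * ((ξ n ω).2 : ℝ)) :=
    ((measurable_of_countable (fun p : ℤ × ℤ => (p.1 : ℝ) * (p.2 : ℝ))).comp
      (hξm n)).stronglyMeasurable
  -- conditional expectations of the pieces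
  have e0 : μ[G n|ℱ n] =ᵐ[μ] G n :=
    Filter.EventuallyEq.of_eq (condExp_of_stronglyMeasurable (hle n) (hGm n) intGn)
  have cX : μ[(fun ω => ((ξ n ω).1 : ℝ))|ℱ n] =ᵐ[μ] fun _ => (0 : ℝ) := by
    have h := condExp_indep_eq ((hmeas n).comap_le) (hle n) hXsm' hIndep
    rw [iX] at h; exact h
  have cY : μ[(fun ω => ((ξ n ω).2 : ℝ))|ℱ n] =ᵐ[μ] fun _ => (0 : ℝ) := by
    have h := condExp_indep_eq ((hmeas n).comap_le) (hle n) hYsm' hIndep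
    rw [iY] at h; exact h
  have c3 : μ[(fun ω => ((ξ n ω).1 : ℝ) * ((ξ n ω).2 : ℝ))|ℱ n] =ᵐ[μ] fun _ => -(1/3 : ℝ) := by
    have h := condExp_indep_eq ((hmeas n).comap_le) (hle n) hXYsm' hIndep
    rw [iXY] at h; exact h
  have c1 : μ[(fun ω => (A n ω : ℝ) * ((ξ n ω).2 : ℝ))|ℱ n] =ᵐ[μ] fun _ => (0 : ℝ) := by
    refine (condExp_mul_of_stronglyMeasurable_left hAsm intAY intY).trans ?_
    filter_upwards [cY] with ω h
    simp [h]
  have c2 : μ[(fun ω => (B n ω : ℝ) * ((ξ n ω).1 : ℝ))|ℱ n] =ᵐ[μ] fun _ => (0 : ℝ) := by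
    refine (condExp_mul_of_stronglyMeasurable_left hBsm intBX intX).trans ?_
    filter_upwards [cX] with ω h
    simp [h]
  -- decomposition of G (n + 1)
  have hdecomp : G (n + 1) = fun ω => G n ω + ((A n ω : ℝ) * ((ξ n ω).2 : ℝ)
      + ((B n ω : ℝ) * ((ξ n ω).1 : ℝ)
      + (((ξ n ω).1 : ℝ) * ((ξ n ω).2 : ℝ) + (1/3 : ℝ)))) := by
    funext ω
    rw [hG (n + 1) ω, hG n ω, hA n ω, hB n ω]
    push_cast
    ring
  have intS3 : Integrable (fun ω => ((ξ n ω).1 : ℝ) * ((ξ n ω).2 : ℝ) + (1/3 : ℝ)) μ :=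
    intXY.add (integrable_const _)
  have intS2 : Integrable (fun ω => (B n ω : ℝ) * ((ξ n ω).1 : ℝ)
      + (((ξ n ω).1 : ℝ) * ((ξ n ω).2 : ℝ) + (1/3 : ℝ))) μ := intBX.add intS3
  have intS1 : Integrable (fun ω => (A n ω : ℝ) * ((ξ n ω).2 : ℝ)
      + ((B n ω : ℝ) * ((ξ n ω).1 : ℝ)
      + (((ξ n ω).1 : ℝ) * ((ξ n ω).2 : ℝ) + (1/3 : ℝ)))) μ := intAY.add intS2
  have main : μ[G (n + 1)|ℱ n] =ᵐ[μ] μ[G n|ℱ n]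
      + (μ[(fun ω => (A n ω : ℝ) * ((ξ n ω).2 : ℝ))|ℱ n]
      + (μ[(fun ω => (B n ω : ℝ) * ((ξ n ω).1 : ℝ))|ℱ n]
      + (μ[(fun ω => ((ξ n ω).1 : ℝ) * ((ξ n ω).2 : ℝ))|ℱ n]
      + μ[(fun _ => (1/3 : ℝ))|ℱ n]))) := by
    rw [hdecomp]
    exact (condExp_add intGn intS1 (ℱ n)).trans (EventuallyEq.add EventuallyEq.rfl
      ((condExp_add intAY intS2 (ℱ n)).trans (EventuallyEq.add EventuallyEq.rfl
      ((condExp_add intBX intS3 (ℱ n)).trans (EventuallyEq.add EventuallyEq.rfl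
      (condExp_add intXY (integrable_const _) (ℱ n)))))))
  refine main.trans ?_
  have h4 : μ[(fun _ => (1/3 : ℝ))|ℱ n] = fun _ => (1/3 : ℝ) := condExp_const (hle n) _
  filter_upwards [e0, c1, c2, c3] with ω h0 h1 h2 h3
  simp only [Pi.add_apply, h0, h1, h2, h3, h4]
  norm_num
end

section
/- The process G_{2,1}(n) = A(n)²·B(n) + A(n)·B(n)² is a martingale with respect to the filtration (F_n), i.e. E[G_{2,1}(n+1) | F_n] = G_{2,1}(n) for every n ≥ 0. -/
open MeasureTheory ProbabilityTheory Filter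
open scoped ENNReal

private lemma stmt6_bound_aux (x y K : ℤ) (hx : |x| ≤ K) (hy : |y| ≤ K) :
    |x ^ 2 * y + x * y ^ 2| ≤ 2 * K ^ 3 := by
  have h0x : (0 : ℤ) ≤ |x| := abs_nonneg x
  have h0y : (0 : ℤ) ≤ |y| := abs_nonneg y
  have hK0 : (0 : ℤ) ≤ K := h0x.trans hx
  calc |x ^ 2 * y + x * y ^ 2| ≤ |x ^ 2 * y| + |x * y ^ 2| := abs_add_le _ _
    _ = |x| ^ 2 * |y| + |x| * |y| ^ 2 := by rw [abs_mul, abs_mul, abs_pow, abs_pow]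
    _ ≤ K ^ 2 * K + K * K ^ 2 := by gcongr
    _ = 2 * K ^ 3 := by ring

/-- The process `G₂₁ n = A n ^ 2 * B n + A n * B n ^ 2` is a martingale
with respect to the filtration generated by the steps. -/
theorem stmt_6
{Ω : Type*} [MeasurableSpace Ω] (μ : Measure Ω) [IsProbabilityMeasure μ]
    (a b : ℕ) (ha : 0 < a) (hb : 0 < b)
    (ξ : ℕ → Ω → ℤ × ℤ)
    (hmeas : ∀ n, Measurable (ξ n))
    (hindep : iIndepFun ξ μ)
    (hunif : ∀ n, ∀ v ∈ ({(-1, 0), (1, -1), (0, 1)} : Set (ℤ × ℤ)),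
      μ {ω | ξ n ω = v} = 1 / 3)
    (A B : ℕ → Ω → ℤ)
    (hA0 : ∀ ω, A 0 ω = (a : ℤ)) (hB0 : ∀ ω, B 0 ω = (b : ℤ))
    (hA : ∀ n ω, A (n + 1) ω = A n ω + (ξ n ω).1)
    (hB : ∀ n ω, B (n + 1) ω = B n ω + (ξ n ω).2)
(ℱ : ℕ → MeasurableSpace Ω)
    (hℱ : ∀ n, ℱ n = ⨆ k ∈ Finset.range n, MeasurableSpace.comap (ξ k) inferInstance)
    (G : ℕ → Ω → ℝ)
    (hG : ∀ n ω, G n ω = ((A n ω ^ 2 * B n ω + A n ω * B n ω ^ 2 : ℤ) : ℝ)) :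
    ∀ n : ℕ, μ[G (n + 1)|ℱ n] =ᵐ[μ] G n := by
  intro n
  classical
  -- ℱ n is below the ambient σ-algebra
  have hle : ℱ n ≤ ‹MeasurableSpace Ω› := by
    rw [hℱ]
    exact iSup₂_le fun k _ => (hmeas k).comap_le
  haveI : IsFiniteMeasure (μ.trim hle) := isFiniteMeasure_trim hle
  -- ξ k is ℱ n measurable for k < n
  have hξF : ∀ k, k < n → Measurable[ℱ n] (ξ k) := by
    intro k hk
    rw [hℱ]
    exact measurable_iff_comap_le.2
      (le_iSup₂ (f := fun k (_ : k ∈ Finset.range n) =>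
        MeasurableSpace.comap (ξ k) inferInstance) k (Finset.mem_range.2 hk))
  -- A n, B n are ℱ n measurable
  have hABmeas : ∀ k, k ≤ n → Measurable[ℱ n] (A k) ∧ Measurable[ℱ n] (B k) := by
    intro k
    induction k with
    | zero =>
      intro _
      constructor
      · have : A 0 = fun _ => (a : ℤ) := funext hA0
        rw [this]; exact measurable_const
      · have : B 0 = fun _ => (b : ℤ) := funext hB0
        rw [this]; exact measurable_const
    | succ k ih =>
      intro hk
      have hk' : k < n := hk
      obtain ⟨ihA, ihB⟩ := ih hk'.le
      have hξk : Measurable[ℱ n] (ξ k) := hξF k hk'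
      constructor
      · have : A (k + 1) = fun ω => A k ω + (ξ k ω).1 := funext (hA k)
        rw [this]; exact ihA.add (measurable_fst.comp hξk)
      · have : B (k + 1) = fun ω => B k ω + (ξ k ω).2 := funext (hB k)
        rw [this]; exact ihB.add (measurable_snd.comp hξk)
  -- ξ n is independent of ℱ n
  have hindepn : Indep (MeasurableSpace.comap (ξ n) inferInstance) (ℱ n) μ := by
    have h := indep_iSup_of_disjoint
      (m := fun k => MeasurableSpace.comap (ξ k) inferInstance)
      (fun k => (hmeas k).comap_le) hindep
      (S := {n}) (T := {k | k < n}) (by simp [Set.disjoint_left])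
    have e1 : (⨆ i ∈ ({n} : Set ℕ), MeasurableSpace.comap (ξ i) inferInstance)
        = MeasurableSpace.comap (ξ n) inferInstance := by simp
    have e2 : (⨆ i ∈ {k | k < n}, MeasurableSpace.comap (ξ i) inferInstance)
        = ℱ n := by
      rw [hℱ]
      simp only [Set.mem_setOf_eq, Finset.mem_range]
    rw [e1, e2] at h
    exact h
  -- each ξ k lands a.s. in the three-point set
  have hS1 : ∀ k, μ {ω | ξ k ω = ((-1 : ℤ), (0 : ℤ)) ∨ ξ k ω = ((1 : ℤ), (-1 : ℤ)) ∨
      ξ k ω = ((0 : ℤ), (1 : ℤ))} = 1 := by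
    intro k
    have h1 := hunif k (-1, 0) (by simp)
    have h2 := hunif k (1, -1) (by simp)
    have h3 := hunif k (0, 1) (by simp)
    have hm2 : MeasurableSet {ω | ξ k ω = ((1 : ℤ), (-1 : ℤ))} :=
      hmeas k (measurableSet_singleton _)
    have hm3 : MeasurableSet {ω | ξ k ω = ((0 : ℤ), (1 : ℤ))} :=
      hmeas k (measurableSet_singleton _)
    have hset : {ω | ξ k ω = ((-1 : ℤ), (0 : ℤ)) ∨ ξ k ω = ((1 : ℤ), (-1 : ℤ)) ∨
        ξ k ω = ((0 : ℤ), (1 : ℤ))}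
        = {ω | ξ k ω = ((-1 : ℤ), (0 : ℤ))} ∪ ({ω | ξ k ω = ((1 : ℤ), (-1 : ℤ))} ∪
          {ω | ξ k ω = ((0 : ℤ), (1 : ℤ))}) := by
      ext ω; simp [Set.mem_union, Set.mem_setOf_eq]
    have hd1 : Disjoint {ω | ξ k ω = ((-1 : ℤ), (0 : ℤ))}
        ({ω | ξ k ω = ((1 : ℤ), (-1 : ℤ))} ∪ {ω | ξ k ω = ((0 : ℤ), (1 : ℤ))}) := by
      rw [Set.disjoint_left]
      rintro ω h1' (h2' | h3') <;> simp_all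
    have hd2 : Disjoint {ω | ξ k ω = ((1 : ℤ), (-1 : ℤ))}
        {ω | ξ k ω = ((0 : ℤ), (1 : ℤ))} := by
      rw [Set.disjoint_left]
      rintro ω h1' h2' <;> simp_all
    rw [hset, measure_union hd1 (hm2.union hm3), measure_union hd2 hm3, h1, h2, h3]
    rw [ENNReal.div_add_div_same, ENNReal.div_add_div_same]
    norm_num
    rw [ENNReal.div_self] <;> norm_num
  have hae : ∀ᵐ ω ∂μ, ∀ k, k ≤ n → (ξ k ω = ((-1 : ℤ), (0 : ℤ)) ∨
      ξ k ω = ((1 : ℤ), (-1 : ℤ)) ∨ ξ k ω = ((0 : ℤ), (1 : ℤ))) := by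
    rw [ae_all_iff]
    intro k
    by_cases hk : k ≤ n
    · have hsm : MeasurableSet {ω | ξ k ω = ((-1 : ℤ), (0 : ℤ)) ∨
          ξ k ω = ((1 : ℤ), (-1 : ℤ)) ∨ ξ k ω = ((0 : ℤ), (1 : ℤ))} := by
        have : {ω | ξ k ω = ((-1 : ℤ), (0 : ℤ)) ∨ ξ k ω = ((1 : ℤ), (-1 : ℤ)) ∨
            ξ k ω = ((0 : ℤ), (1 : ℤ))}
            = ξ k ⁻¹' {((-1 : ℤ), (0 : ℤ)), ((1 : ℤ), (-1 : ℤ)), ((0 : ℤ), (1 : ℤ))} := by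
          ext ω; simp [Set.mem_insert_iff]
        rw [this]
        exact hmeas k (((measurableSet_singleton _).insert _).insert _)
      have hc : μ {ω | ξ k ω = ((-1 : ℤ), (0 : ℤ)) ∨ ξ k ω = ((1 : ℤ), (-1 : ℤ)) ∨
          ξ k ω = ((0 : ℤ), (1 : ℤ))}ᶜ = 0 := by
        rw [measure_compl hsm (measure_ne_top μ _), hS1 k, measure_univ, tsub_self]
      have hc' : ∀ᵐ ω ∂μ, (ξ k ω = ((-1 : ℤ), (0 : ℤ)) ∨ ξ k ω = ((1 : ℤ), (-1 : ℤ)) ∨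
          ξ k ω = ((0 : ℤ), (1 : ℤ))) := by
        rw [ae_iff, ← Set.compl_setOf]
        exact hc
      exact hc'.mono fun ω hω _ => hω
    · filter_upwards with ω hk' ; exact absurd hk' hk
  -- pointwise bounds on A n, B n, a.e.
  have hbnd : ∀ᵐ ω ∂μ, |A n ω| ≤ (a : ℤ) + n ∧ |B n ω| ≤ (b : ℤ) + n := by
    filter_upwards [hae] with ω hω
    have key : ∀ m, m ≤ n → |A m ω| ≤ (a : ℤ) + m ∧ |B m ω| ≤ (b : ℤ) + m := by
      intro m
      induction m with
      | zero =>
        intro _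
        rw [hA0, hB0]
        constructor <;> simp
      | succ m ih =>
        intro hm
        have hm' : m ≤ n := (Nat.le_succ m).trans hm
        obtain ⟨ihA, ihB⟩ := ih hm'
        have hξ := hω m hm'
        have h1 : |(ξ m ω).1| ≤ 1 ∧ |(ξ m ω).2| ≤ 1 := by
          rcases hξ with h | h | h <;> rw [h] <;> norm_num
        constructor
        · rw [hA]
          calc |A m ω + (ξ m ω).1| ≤ |A m ω| + |(ξ m ω).1| := abs_add_le _ _
            _ ≤ ((a : ℤ) + m) + 1 := add_le_add ihA h1.1
            _ = (a : ℤ) + (m + 1 : ℕ) := by push_cast; ring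
        · rw [hB]
          calc |B m ω + (ξ m ω).2| ≤ |B m ω| + |(ξ m ω).2| := abs_add_le _ _
            _ ≤ ((b : ℤ) + m) + 1 := add_le_add ihB h1.2
            _ = (b : ℤ) + (m + 1 : ℕ) := by push_cast; ring
    exact key n le_rfl
  -- the summand functions
  set K : ℤ := (a : ℤ) + b + n + 1 with hK
  set C : ℝ := ((2 * K ^ 3 : ℤ) : ℝ) with hC
  set F : ℤ × ℤ → Ω → ℝ := fun v ω =>
    (((A n ω + v.1) ^ 2 * (B n ω + v.2) + (A n ω + v.1) * (B n ω + v.2) ^ 2 : ℤ) : ℝ)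
    with hF
  set I : ℤ × ℤ → Ω → ℝ := fun v => Set.indicator {ω | ξ n ω = v} (fun _ => 1) with hI
  have hAn := (hABmeas n le_rfl).1
  have hBn := (hABmeas n le_rfl).2
  have hFmeas : ∀ v, StronglyMeasurable[ℱ n] (F v) := by
    intro v
    refine Measurable.stronglyMeasurable ?_
    exact (measurable_from_top.comp
      ((((hAn.add measurable_const).pow_const 2).mul (hBn.add measurable_const)).add
        ((hAn.add measurable_const).mul ((hBn.add measurable_const).pow_const 2))))
  have hsv : ∀ v : ℤ × ℤ, MeasurableSet {ω | ξ n ω = v} := fun v =>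
    hmeas n (measurableSet_singleton v)
  -- bounds
  have hFbd : ∀ v ∈ ({(-1, 0), (1, -1), (0, 1)} : Set (ℤ × ℤ)),
      ∀ᵐ ω ∂μ, ‖F v ω‖ ≤ C := by
    intro v hv
    filter_upwards [hbnd] with ω hω
    have hv1 : |v.1| ≤ 1 ∧ |v.2| ≤ 1 := by
      rcases hv with rfl | rfl | rfl <;> norm_num
    have hb0 : (0 : ℤ) ≤ (b : ℤ) := Int.natCast_nonneg b
    have ha0 : (0 : ℤ) ≤ (a : ℤ) := Int.natCast_nonneg a
    have hx : |A n ω + v.1| ≤ K := by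
      calc |A n ω + v.1| ≤ |A n ω| + |v.1| := abs_add_le _ _
        _ ≤ ((a : ℤ) + n) + 1 := add_le_add hω.1 hv1.1
        _ ≤ K := by rw [hK]; linarith
    have hy : |B n ω + v.2| ≤ K := by
      calc |B n ω + v.2| ≤ |B n ω| + |v.2| := abs_add_le _ _
        _ ≤ ((b : ℤ) + n) + 1 := add_le_add hω.2 hv1.2
        _ ≤ K := by rw [hK]; linarith
    rw [Real.norm_eq_abs, hF, hC, ← Int.cast_abs]
    exact_mod_cast stmt6_bound_aux _ _ K hx hy
  have hIbd : ∀ v : ℤ × ℤ, ∀ ω, ‖I v ω‖ ≤ 1 := by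
    intro v ω
    rw [hI]
    simp only [Set.indicator_apply]
    split <;> simp
  -- integrability
  have hFint : ∀ v ∈ ({(-1, 0), (1, -1), (0, 1)} : Set (ℤ × ℤ)), Integrable (F v) μ := by
    intro v hv
    exact Integrable.mono' (integrable_const C)
      ((hFmeas v).mono hle).aestronglyMeasurable (hFbd v hv)
  have hIint : ∀ v : ℤ × ℤ, Integrable (I v) μ := by
    intro v
    rw [hI]
    exact (integrable_const (1 : ℝ)).indicator (hsv v)
  have hFIint : ∀ v ∈ ({(-1, 0), (1, -1), (0, 1)} : Set (ℤ × ℤ)),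
      Integrable (fun ω => F v ω * I v ω) μ := by
    intro v hv
    refine Integrable.mono' (integrable_const C)
      (((hFmeas v).mono hle).aestronglyMeasurable.mul
        ((stronglyMeasurable_const.indicator (hsv v)).aestronglyMeasurable)) ?_
    filter_upwards [hFbd v hv] with ω hω
    have h1 := hIbd v ω
    have h0 : (0 : ℝ) ≤ ‖F v ω‖ := norm_nonneg _
    calc ‖F v ω * I v ω‖ = ‖F v ω‖ * ‖I v ω‖ := norm_mul _ _
      _ ≤ C * 1 := mul_le_mul hω h1 (norm_nonneg _) (h0.trans hω)
      _ = C := mul_one C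
  -- decomposition of G (n+1)
  have hdecomp : G (n + 1) =ᵐ[μ]
      fun ω => F (-1, 0) ω * I (-1, 0) ω + F (1, -1) ω * I (1, -1) ω +
        F (0, 1) ω * I (0, 1) ω := by
    filter_upwards [hae] with ω hω
    have h := hω n le_rfl
    have e : G (n + 1) ω = F (ξ n ω) ω := by
      rw [hG, hF, hA, hB]
    rcases h with h | h | h <;>
      · rw [e, h]
        simp only [hI, Set.indicator_apply, Set.mem_setOf_eq, h]
        norm_num
  -- conditional expectation of each summand
  have hcond : ∀ v ∈ ({(-1, 0), (1, -1), (0, 1)} : Set (ℤ × ℤ)),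
      μ[fun ω => F v ω * I v ω|ℱ n] =ᵐ[μ] fun ω => F v ω * (1 / 3 : ℝ) := by
    intro v hv
    have hIsm : StronglyMeasurable[MeasurableSpace.comap (ξ n) inferInstance] (I v) := by
      rw [hI]
      exact stronglyMeasurable_const.indicator ⟨{v}, measurableSet_singleton v, rfl⟩
    have h1 : μ[F v * I v|ℱ n] =ᵐ[μ] F v * μ[I v|ℱ n] :=
      condExp_mul_of_stronglyMeasurable_left (hFmeas v) (hFIint v hv) (hIint v)
    have h2 : μ[I v|ℱ n] =ᵐ[μ] fun _ => ∫ ω, I v ω ∂μ :=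
      condExp_indep_eq (hmeas n).comap_le hle hIsm (hindepn)
    have h3 : ∫ ω, I v ω ∂μ = (1 / 3 : ℝ) := by
      rw [hI]
      rw [integral_indicator_const (1 : ℝ) (hsv v), measureReal_def, hunif n v hv]
      simp [ENNReal.toReal_div]
    refine h1.trans ?_
    filter_upwards [h2] with ω hω
    simp only [Pi.mul_apply, hω, h3]
  have hc1 := hcond (-1, 0) (by simp)
  have hc2 := hcond (1, -1) (by simp)
  have hc3 := hcond (0, 1) (by simp)
  -- assemble
  have hadd : μ[fun ω => F (-1, 0) ω * I (-1, 0) ω + F (1, -1) ω * I (1, -1) ω +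
      F (0, 1) ω * I (0, 1) ω|ℱ n] =ᵐ[μ]
      μ[fun ω => F (-1, 0) ω * I (-1, 0) ω|ℱ n] +
        μ[fun ω => F (1, -1) ω * I (1, -1) ω|ℱ n] +
        μ[fun ω => F (0, 1) ω * I (0, 1) ω|ℱ n] := by
    have h12 : Integrable (fun ω => F (-1, 0) ω * I (-1, 0) ω +
        F (1, -1) ω * I (1, -1) ω) μ := (hFIint _ (by simp)).add (hFIint _ (by simp))
    have hA' : μ[fun ω => (F (-1, 0) ω * I (-1, 0) ω + F (1, -1) ω * I (1, -1) ω) +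
        F (0, 1) ω * I (0, 1) ω|ℱ n] =ᵐ[μ]
        μ[fun ω => F (-1, 0) ω * I (-1, 0) ω + F (1, -1) ω * I (1, -1) ω|ℱ n] +
          μ[fun ω => F (0, 1) ω * I (0, 1) ω|ℱ n] :=
      condExp_add (μ := μ) (m := ℱ n) h12 (hFIint (0, 1) (by simp))
    have hB' : μ[fun ω => F (-1, 0) ω * I (-1, 0) ω + F (1, -1) ω * I (1, -1) ω|ℱ n] =ᵐ[μ]
        μ[fun ω => F (-1, 0) ω * I (-1, 0) ω|ℱ n] + μ[fun ω => F (1, -1) ω * I (1, -1) ω|ℱ n] :=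
      condExp_add (μ := μ) (m := ℱ n) (hFIint ((-1 : ℤ), (0 : ℤ)) (by simp))
        (hFIint ((1 : ℤ), (-1 : ℤ)) (by simp))
    refine hA'.trans ?_
    filter_upwards [hB'] with ω hω
    simp only [Pi.add_apply] at hω ⊢
    rw [hω]
  have hfinal : ∀ ω, F (-1, 0) ω * (1 / 3 : ℝ) + F (1, -1) ω * (1 / 3 : ℝ) +
      F (0, 1) ω * (1 / 3 : ℝ) = G n ω := by
    intro ω
    rw [hG]
    simp only [hF]
    push_cast
    ring
  refine (condExp_congr_ae hdecomp).trans (hadd.trans ?_)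
  filter_upwards [hc1, hc2, hc3] with ω h1 h2 h3
  simp only [Pi.add_apply, h1, h2, h3]
  exact hfinal ω
end
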